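/- arXiv:2605.09462 — 9 statements merged into one kernel-verified Lean document; each statement's English description precedes it below -/
import Mathlib

section
/- Let (Ω, F, P) be a probability space with random variables A ∈ {0,1} and Z, D, W, X. Suppose q0 is a bounded measurable function of (Z,X), q1 a bounded measurable function of (Z,D,X), and 0 < P(A=1 | D, W, X) < 1 a.s. Then E[(1−A)·q1(Z,D,X) − A·q0(Z,X) | W, D, X] = 0 a.s. holds if and only if E[q0(Z,X) | A=1, D, W, X] · P(A=1|D,W,X)/P(A=0|D,W,X) = E[q1(Z,D,X) | A=0, D, W, X] a.s. -/
open MeasureTheory ProbabilityTheory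
open scoped MeasureTheory ProbabilityTheory

lemma integrable_of_bdd' {Ω : Type*} {mΩ : MeasurableSpace Ω} {μ : Measure Ω} [IsFiniteMeasure μ]
    {f : Ω → ℝ} (hf : AEStronglyMeasurable f μ) {C : ℝ} (hb : ∀ ω, |f ω| ≤ C) :
    Integrable f μ :=
  (integrable_const C).mono' hf (Filter.Eventually.of_forall fun ω => by
    simpa using hb ω)

lemma cond_condexp_mul' {Ω : Type*} {m : MeasurableSpace Ω} {mΩ : MeasurableSpace Ω}
    (μ : Measure Ω) [IsProbabilityMeasure μ] (hm : m ≤ mΩ)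
    {S : Set Ω} (hS : MeasurableSet S) (hS0 : μ S ≠ 0)
    {f : Ω → ℝ} (hf : Measurable f) {C : ℝ} (hC : 0 ≤ C) (hfb : ∀ ω, |f ω| ≤ C) :
    (fun ω => ((μ[|S])[f|m]) ω * (μ[S.indicator (fun _ => (1:ℝ))|m]) ω)
      =ᵐ[μ] μ[S.indicator f|m] := by
  haveI hPM : IsProbabilityMeasure (μ[|S]) := cond_isProbabilityMeasure hS0
  haveI : IsFiniteMeasure (μ.trim hm) := isFiniteMeasure_trim hm
  haveI : IsFiniteMeasure ((μ[|S]).trim hm) := isFiniteMeasure_trim hm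
  set i : Ω → ℝ := S.indicator (fun _ => 1) with hi_def
  have hi_int : Integrable i μ := (integrable_const 1).indicator hS
  have hi_bd : ∀ ω, ‖i ω‖ ≤ 1 := by
    intro ω
    by_cases h : ω ∈ S <;> simp [hi_def, Set.indicator_of_mem, Set.indicator_of_notMem, h]
  set E : Ω → ℝ := (μ[|S])[f|m] with hE_def
  have hE_sm : StronglyMeasurable[m] E := stronglyMeasurable_condExp
  have hf_int : Integrable f (μ[|S]) := integrable_of_bdd' hf.aestronglyMeasurable hfb
  have hf_intμ : Integrable f μ := integrable_of_bdd' hf.aestronglyMeasurable hfb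
  have hE_bd : ∀ᵐ ω ∂(μ[|S]), |E ω| ≤ C := by
    have h1 : E ≤ᵐ[μ[|S]] (μ[|S])[fun _ => C|m] :=
      condExp_mono hf_int (integrable_const C)
        (Filter.Eventually.of_forall fun ω => (abs_le.1 (hfb ω)).2)
    have h2 : (μ[|S])[fun _ => (-C)|m] ≤ᵐ[μ[|S]] E :=
      condExp_mono (integrable_const _) hf_int
        (Filter.Eventually.of_forall fun ω => (abs_le.1 (hfb ω)).1)
    rw [condExp_const hm] at h1 h2
    filter_upwards [h1, h2] with ω ha hb
    exact abs_le.2 ⟨hb, ha⟩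
  set E' : Ω → ℝ := fun ω => max (-C) (min C (E ω)) with hE'_def
  have hE'_meas : Measurable[m] E' :=
    measurable_const.max (measurable_const.min hE_sm.measurable)
  have hE'_sm : StronglyMeasurable[m] E' := hE'_meas.stronglyMeasurable
  have hE'_bd : ∀ ω, |E' ω| ≤ C := fun ω =>
    abs_le.2 ⟨le_max_left _ _, max_le (neg_le_self hC) (min_le_left _ _)⟩
  have hE'E : E' =ᵐ[μ[|S]] E := by
    filter_upwards [hE_bd] with ω hω
    obtain ⟨h1, h2⟩ := abs_le.1 hω
    simp [hE'_def, min_eq_right h2, max_eq_right h1]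
  set T : Set Ω := {ω | E' ω = E ω}ᶜ with hT_def
  have hT : MeasurableSet[m] T :=
    (measurableSet_eq_fun hE'_sm.measurable hE_sm.measurable).compl
  have hTμS : (μ[|S]) T = 0 := by
    have := ae_iff.mp hE'E
    simpa [hT_def, Set.compl_setOf] using this
  have hST : μ (S ∩ T) = 0 := by
    have h := cond_apply hS μ T
    rw [hTμS] at h
    rcases mul_eq_zero.1 h.symm with h' | h'
    · exact absurd h' (ENNReal.inv_ne_zero.2 (measure_ne_top μ S))
    · exact h'
  set h : Ω → ℝ := μ[i|m] with hh_def
  have h_nonneg : 0 ≤ᵐ[μ] h :=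
    condExp_nonneg (Filter.Eventually.of_forall fun ω =>
      Set.indicator_nonneg (fun _ _ => zero_le_one) ω)
  have hT0 : ∀ᵐ ω ∂μ, ω ∈ T → h ω = 0 := by
    have hint : ∫ ω in T, h ω ∂μ = ∫ ω in T, i ω ∂μ := setIntegral_condExp hm hi_int hT
    have hiT : ∫ ω in T, i ω ∂μ = 0 := by
      rw [hi_def, setIntegral_indicator hS]
      simp [Set.inter_comm T S, hST, Measure.real]
    have h0 : h =ᵐ[μ.restrict T] 0 := by
      have hnn : 0 ≤ᵐ[μ.restrict T] h := ae_restrict_of_ae h_nonneg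
      have hint' : Integrable h (μ.restrict T) := integrable_condExp.integrableOn
      exact (integral_eq_zero_iff_of_nonneg_ae hnn hint').1 (by rw [hint, hiT])
    exact (ae_restrict_iff' (hm T hT)).1 h0
  have hE'h_Eh : (fun ω => E' ω * h ω) =ᵐ[μ] fun ω => E ω * h ω := by
    filter_upwards [hT0] with ω hω
    by_cases hmem : ω ∈ T
    · rw [hω hmem]; ring
    · have : E' ω = E ω := by simpa [hT_def] using hmem
      rw [this]
  have hSf_int : Integrable (S.indicator f) μ := hf_intμ.indicator hS
  have cond_setIntegral : ∀ (φ : Ω → ℝ) (B : Set Ω), MeasurableSet B →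
      (μ S).toReal * ∫ ω in B, φ ω ∂(μ[|S]) = ∫ ω in B ∩ S, φ ω ∂μ := by
    intro φ B hB
    show (μ S).toReal * ∫ ω in B, φ ω ∂((μ S)⁻¹ • μ.restrict S) = _
    rw [Measure.restrict_smul, integral_smul_measure, Measure.restrict_restrict hB,
      ENNReal.toReal_inv, smul_eq_mul, ← mul_assoc,
      mul_inv_cancel₀ (ENNReal.toReal_ne_zero.2 ⟨hS0, measure_ne_top μ S⟩), one_mul]
  have key : (fun ω => E' ω * h ω) =ᵐ[μ] μ[S.indicator f|m] := by
    refine ae_eq_condExp_of_forall_setIntegral_eq hm hSf_int (fun s hs hμs => ?_)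
      (fun B hB hμB => ?_) ?_
    · exact (integrable_condExp.bdd_mul ((hE'_sm.mono hm).aestronglyMeasurable)
        (Filter.Eventually.of_forall fun ω => by simpa using hE'_bd ω)).integrableOn
    · have hE'i_int : Integrable (fun ω => E' ω * i ω) μ :=
        hi_int.bdd_mul ((hE'_sm.mono hm).aestronglyMeasurable)
          (Filter.Eventually.of_forall fun ω => by simpa using hE'_bd ω)
      have pull : μ[(fun ω => E' ω * i ω)|m] =ᵐ[μ] fun ω => E' ω * h ω :=
        condExp_stronglyMeasurable_mul_of_bound hm hE'_sm hi_int C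
          (Filter.Eventually.of_forall fun ω => by simpa using hE'_bd ω)
      have hE'i_ind : ∀ ω, E' ω * i ω = S.indicator E' ω := by
        intro ω
        by_cases hmem : ω ∈ S <;>
          simp [hi_def, Set.indicator_of_mem, Set.indicator_of_notMem, hmem]
      calc ∫ ω in B, E' ω * h ω ∂μ
          = ∫ ω in B, (μ[(fun ω => E' ω * i ω)|m]) ω ∂μ :=
            (setIntegral_congr_ae (hm B hB) (by filter_upwards [pull] with ω hω _ using hω.symm))
        _ = ∫ ω in B, E' ω * i ω ∂μ := setIntegral_condExp hm hE'i_int hB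
        _ = ∫ ω in B ∩ S, E' ω ∂μ := by simp_rw [hE'i_ind]; exact setIntegral_indicator hS
        _ = (μ S).toReal * ∫ ω in B, E' ω ∂(μ[|S]) := (cond_setIntegral E' B (hm B hB)).symm
        _ = (μ S).toReal * ∫ ω in B, f ω ∂(μ[|S]) := by
            congr 1
            rw [setIntegral_congr_ae (hm B hB)
                (by filter_upwards [hE'E] with ω hω _ using hω)]
            exact setIntegral_condExp hm hf_int hB
        _ = ∫ ω in B ∩ S, f ω ∂μ := cond_setIntegral f B (hm B hB)
        _ = ∫ ω in B, S.indicator f ω ∂μ := (setIntegral_indicator hS).symm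
    · exact (hE'_sm.mul stronglyMeasurable_condExp).aestronglyMeasurable
  exact hE'h_Eh.symm.trans key


/-- `E[(1−A)q1(Z,D,X) − A q0(Z,X) | W,D,X] = 0` a.s. iff
`E[q0 | A=1,D,W,X] · P(A=1|D,W,X)/P(A=0|D,W,X) = E[q1 | A=0,D,W,X]` a.s.
`P(A=1|D,W,X)` is encoded as `E[A | σ(D,W,X)]` and `P(A=0|·) = 1 − E[A|·]`;
conditional expectations given `A=a` are conditional expectations w.r.t. `σ(D,W,X)`
under the conditional measure `μ[|{A=a}]`. -/
theorem stmt1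
    {Ω : Type*} [mΩ : MeasurableSpace Ω] (μ : Measure Ω) [IsProbabilityMeasure μ]
    (A Z D W X : Ω → ℝ)
    (hA : Measurable A) (hZ : Measurable Z) (hD : Measurable D)
    (hW : Measurable W) (hX : Measurable X)
    (hA01 : ∀ ω, A ω = 0 ∨ A ω = 1)
    (q0 : ℝ × ℝ → ℝ) (hq0 : Measurable q0) (C0 : ℝ) (hq0b : ∀ p, |q0 p| ≤ C0)
    (q1 : ℝ × ℝ × ℝ → ℝ) (hq1 : Measurable q1) (C1 : ℝ) (hq1b : ∀ p, |q1 p| ≤ C1)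
    (mDWX : MeasurableSpace Ω)
    (hmDWX : mDWX = MeasurableSpace.comap (fun ω => (D ω, W ω, X ω)) inferInstance)
    (hpos : ∀ᵐ ω ∂μ, 0 < (μ[A | mDWX]) ω ∧ (μ[A | mDWX]) ω < 1) :
    ((μ[(fun ω => (1 - A ω) * q1 (Z ω, D ω, X ω) - A ω * q0 (Z ω, X ω)) | mDWX])
        =ᵐ[μ] 0)
      ↔ (∀ᵐ ω ∂μ,
          ((μ[|{ω | A ω = 1}])[(fun ω => q0 (Z ω, X ω)) | mDWX]) ω
              * ((μ[A | mDWX]) ω / (1 - (μ[A | mDWX]) ω))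
            = ((μ[|{ω | A ω = 0}])[(fun ω => q1 (Z ω, D ω, X ω)) | mDWX]) ω) := by
  have hm : mDWX ≤ mΩ := by
    rw [hmDWX]
    exact measurable_iff_comap_le.mp ((hD.prodMk (hW.prodMk hX)))
  haveI : IsFiniteMeasure (μ.trim hm) := isFiniteMeasure_trim hm
  haveI : (MeasureTheory.ae μ).NeBot := ae_neBot.2 (IsProbabilityMeasure.ne_zero μ)
  set S1 : Set Ω := {ω | A ω = 1} with hS1_def
  set S0 : Set Ω := {ω | A ω = 0} with hS0_def
  have hS1 : MeasurableSet[mΩ] S1 := hA (measurableSet_singleton 1)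
  have hS0 : MeasurableSet[mΩ] S0 := hA (measurableSet_singleton 0)
  -- bounds are nonnegative
  have hC0 : 0 ≤ C0 := (abs_nonneg _).trans (hq0b (0, 0))
  have hC1 : 0 ≤ C1 := (abs_nonneg _).trans (hq1b (0, 0, 0))
  -- measurable component functions
  have hf0 : Measurable[mΩ] fun ω => q0 (Z ω, X ω) := hq0.comp (hZ.prodMk hX)
  have hf1 : Measurable[mΩ] fun ω => q1 (Z ω, D ω, X ω) :=
    hq1.comp (hZ.prodMk (hD.prodMk hX))
  -- A is {0,1}-valued
  have hAbd : ∀ ω, |A ω| ≤ 1 := fun ω => by rcases hA01 ω with h | h <;> simp [h]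
  have hAint : Integrable A μ := integrable_of_bdd' hA.aestronglyMeasurable hAbd
  -- indicator identities
  have hAind : A = S1.indicator (fun _ => (1 : ℝ)) := by
    funext ω
    rcases hA01 ω with h | h <;> simp [Set.indicator_apply, hS1_def, h]
  have h1Aind : (fun ω => 1 - A ω) = S0.indicator (fun _ => (1 : ℝ)) := by
    funext ω
    rcases hA01 ω with h | h <;> simp [Set.indicator_apply, hS0_def, h]
  have hg0ind : (fun ω => A ω * q0 (Z ω, X ω))
      = S1.indicator (fun ω => q0 (Z ω, X ω)) := by
    funext ω
    rcases hA01 ω with h | h <;> simp [Set.indicator_apply, hS1_def, h]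
  have hg1ind : (fun ω => (1 - A ω) * q1 (Z ω, D ω, X ω))
      = S0.indicator (fun ω => q1 (Z ω, D ω, X ω)) := by
    funext ω
    rcases hA01 ω with h | h <;> simp [Set.indicator_apply, hS0_def, h]
  -- nonzero masses
  have hS1pos : μ S1 ≠ 0 := by
    intro h0
    have hA0 : A =ᵐ[μ] (0 : Ω → ℝ) := by
      rw [Filter.EventuallyEq, ae_iff]
      have : {ω | ¬ A ω = (0 : Ω → ℝ) ω} = S1 := by
        ext ω; rcases hA01 ω with h | h <;> simp [hS1_def, h]
      rwa [this]
    have hc : μ[A|mDWX] =ᵐ[μ] (0 : Ω → ℝ) := by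
      refine (condExp_congr_ae hA0).trans ?_
      rw [condExp_zero]
    obtain ⟨ω, hω1, hω2⟩ := (hpos.and hc).exists
    rw [hω2] at hω1
    exact lt_irrefl _ hω1.1
  have hS0pos : μ S0 ≠ 0 := by
    intro h0
    have hA1 : A =ᵐ[μ] (fun _ => (1 : ℝ)) := by
      rw [Filter.EventuallyEq, ae_iff]
      have : {ω | ¬ A ω = (fun _ => (1 : ℝ)) ω} = S0 := by
        ext ω; rcases hA01 ω with h | h <;> simp [hS0_def, h]
      rwa [this]
    have hc : μ[A|mDWX] =ᵐ[μ] (fun _ => (1 : ℝ)) := by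
      refine (condExp_congr_ae hA1).trans ?_
      rw [condExp_const hm]
    obtain ⟨ω, hω1, hω2⟩ := (hpos.and hc).exists
    rw [hω2] at hω1
    exact lt_irrefl _ hω1.2
  -- key identities from the bridge lemma
  have K1 := cond_condexp_mul' μ hm hS1 hS1pos hf0 hC0 (fun ω => hq0b _)
  have K0 := cond_condexp_mul' μ hm hS0 hS0pos hf1 hC1 (fun ω => hq1b _)
  rw [← hAind, ← hg0ind] at K1
  rw [← h1Aind, ← hg1ind] at K0
  -- condexp of 1 - A
  have h1A : μ[(fun ω => 1 - A ω)|mDWX] =ᵐ[μ] fun ω => 1 - (μ[A|mDWX]) ω := by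
    have hsub : (fun ω => 1 - A ω) = (fun _ => (1 : ℝ)) - A := rfl
    rw [hsub]
    refine (condExp_sub (integrable_const 1) hAint mDWX).trans ?_
    rw [condExp_const hm]
    exact Filter.Eventually.of_forall fun ω => rfl
  -- integrability of the two products
  have hg0int : Integrable (fun ω => A ω * q0 (Z ω, X ω)) μ :=
    integrable_of_bdd' ((hA.mul hf0).aestronglyMeasurable)
      (C := C0) (fun ω => by
        rcases hA01 ω with h | h <;> simp [h, abs_mul, hq0b _, hC0])
  have hg1int : Integrable (fun ω => (1 - A ω) * q1 (Z ω, D ω, X ω)) μ :=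
    integrable_of_bdd' (((measurable_const.sub hA).mul hf1).aestronglyMeasurable)
      (C := C1) (fun ω => by
        rcases hA01 ω with h | h <;> simp [h, abs_mul, hq1b _, hC1])
  -- split the conditional expectation of the difference
  have hsplit : (μ[(fun ω => (1 - A ω) * q1 (Z ω, D ω, X ω) - A ω * q0 (Z ω, X ω))|mDWX])
      =ᵐ[μ] μ[(fun ω => (1 - A ω) * q1 (Z ω, D ω, X ω))|mDWX]
        - μ[(fun ω => A ω * q0 (Z ω, X ω))|mDWX] := by
    have hd : (fun ω => (1 - A ω) * q1 (Z ω, D ω, X ω) - A ω * q0 (Z ω, X ω))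
        = (fun ω => (1 - A ω) * q1 (Z ω, D ω, X ω)) - (fun ω => A ω * q0 (Z ω, X ω)) := rfl
    rw [hd]
    exact condExp_sub hg1int hg0int mDWX
  constructor
  · intro hLHS
    filter_upwards [hsplit, K1, K0, h1A, hpos, hLHS] with ω e1 e2 e3 e4 e5 e6
    simp only [Pi.sub_apply, Pi.zero_apply] at e1 e2 e3 e4 e6
    rw [e6] at e1
    rw [e4] at e3
    have hne : 1 - (μ[A|mDWX]) ω ≠ 0 := by
      have := e5.2; intro hc; nlinarith
    have heq : ((μ[|S0])[(fun ω => q1 (Z ω, D ω, X ω))|mDWX]) ω * (1 - (μ[A|mDWX]) ω)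
        = ((μ[|S1])[(fun ω => q0 (Z ω, X ω))|mDWX]) ω * (μ[A|mDWX]) ω := by
      rw [e3, e2]; linarith
    rw [← mul_div_assoc, div_eq_iff hne]
    linear_combination -heq
  · intro hRHS
    filter_upwards [hsplit, K1, K0, h1A, hpos, hRHS] with ω e1 e2 e3 e4 e5 e6
    simp only [Pi.sub_apply, Pi.zero_apply] at e1 e2 e3 ⊢
    rw [e4] at e3
    have hne : 1 - (μ[A|mDWX]) ω ≠ 0 := by
      have := e5.2; intro hc; nlinarith
    rw [← mul_div_assoc, div_eq_iff hne] at e6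
    rw [e1, ← e2, ← e3]
    linear_combination -e6
end

section
/- Let A ∈ {0,1} and Y, Z, W, M, D, X be random variables. Suppose integrable measurable functions h2(W,M,D,X), h1(W,D,X), h0(W,X), q0(Z,X), q1(Z,D,X), q2(Z,M,D,X) satisfy the six conditional moment equations: (a) E[Y − h2 | A=1, M, D, Z, X] = 0; (b) E[h2 − h1 | A=0, D, Z, X] = 0; (c) E[h1 − h0 | A=1, Z, X] = 0; (d) E[A·q0 − 1 | W, X] = 0; (e) E[(1−A)·q1 − A·q0 | W, D, X] = 0; (f) E[A·q2 − (1−A)·q1 | W, M, D, X] = 0, all almost surely, with all relevant products integrable. Then the four quantities E[h0(W,X)], E[A·q0(Z,X)·h1(W,D,X)], E[(1−A)·q1(Z,D,X)·h2(W,M,D,X)], and E[A·Y·q2(Z,M,D,X)] are all equal. -/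
open MeasureTheory ProbabilityTheory
open scoped MeasureTheory ProbabilityTheory


/-- If `E[f | m] = 0` a.e. and `g` is `m`-measurable, then `∫ g f = 0`. -/
lemma key_main {Ω : Type*} [mΩ : MeasurableSpace Ω] {μ : Measure Ω} [IsFiniteMeasure μ]
    {m : MeasurableSpace Ω} (hm : m ≤ mΩ) {f g : Ω → ℝ}
    (hg : StronglyMeasurable[m] g) (hf : Integrable f μ)
    (hgf : Integrable (fun ω => g ω * f ω) μ)
    (hce : μ[f|m] =ᵐ[μ] 0) : ∫ ω, g ω * f ω ∂μ = 0 := by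
  have hmul : μ[fun ω => g ω * f ω|m] =ᵐ[μ] fun ω => g ω * (μ[f|m]) ω :=
    condExp_mul_of_stronglyMeasurable_left hg hgf hf
  have hzero : μ[fun ω => g ω * f ω|m] =ᵐ[μ] 0 := by
    refine hmul.trans ?_
    filter_upwards [hce] with ω hω
    simp [hω]
  calc ∫ ω, g ω * f ω ∂μ = ∫ ω, (μ[fun ω => g ω * f ω|m]) ω ∂μ := (integral_condExp hm).symm
    _ = 0 := by rw [integral_congr_ae hzero]; simp

lemma cond_mul_integral {Ω : Type*} [mΩ : MeasurableSpace Ω] (μ : Measure Ω) [IsFiniteMeasure μ]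
    (s : Set Ω) (f : Ω → ℝ) :
    (μ s).toReal * ∫ ω, f ω ∂(μ[|s]) = ∫ ω in s, f ω ∂μ := by
  rcases eq_or_ne (μ s) 0 with h | h
  · rw [Measure.restrict_eq_zero.mpr h, integral_zero_measure, h]
    simp
  · rw [ProbabilityTheory.cond, integral_smul_measure, ENNReal.toReal_inv, smul_eq_mul,
      ← mul_assoc, mul_inv_cancel₀ (ENNReal.toReal_ne_zero.mpr ⟨h, measure_ne_top μ s⟩), one_mul]

lemma integrable_cond_of_restrict {Ω : Type*} [mΩ : MeasurableSpace Ω] {μ : Measure Ω}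
    {s : Set Ω} (h : μ s ≠ 0) {f : Ω → ℝ} (hf : Integrable f (μ.restrict s)) :
    Integrable f (μ[|s]) := by
  rw [ProbabilityTheory.cond]
  exact hf.smul_measure (ENNReal.inv_ne_top.mpr h)

/-- conditional-measure version: if `E_{μ[|s]}[f | m] = 0` a.e. and `g` is `m`-measurable,
then `∫_s g f dμ = 0`. -/
lemma key_cond {Ω : Type*} [mΩ : MeasurableSpace Ω] {μ : Measure Ω} [IsFiniteMeasure μ]
    {s : Set Ω} {m : MeasurableSpace Ω} (hm : m ≤ mΩ) {f g : Ω → ℝ}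
    (hg : StronglyMeasurable[m] g) (hf : Integrable f μ)
    (hgf : Integrable (fun ω => g ω * f ω) (μ.restrict s))
    (hce : (μ[|s])[f|m] =ᵐ[μ[|s]] 0) : ∫ ω in s, g ω * f ω ∂μ = 0 := by
  rcases eq_or_ne (μ s) 0 with h | h
  · rw [Measure.restrict_eq_zero.mpr h, integral_zero_measure]
  · haveI : IsProbabilityMeasure (μ[|s]) := cond_isProbabilityMeasure (m := mΩ) h
    have hint : ∫ ω, g ω * f ω ∂(μ[|s]) = 0 :=
      key_main (mΩ := mΩ) hm hg (integrable_cond_of_restrict (mΩ := mΩ) h hf.restrict)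
        (integrable_cond_of_restrict (mΩ := mΩ) h hgf) hce
    rw [← cond_mul_integral (mΩ := mΩ) μ s, hint, mul_zero]

lemma integral_indic_mul {Ω : Type*} [mΩ : MeasurableSpace Ω] {μ : Measure Ω}
    {B : Ω → ℝ} {s : Set Ω} (hs : MeasurableSet s)
    (hB1 : ∀ ω ∈ s, B ω = 1) (hB0 : ∀ ω ∉ s, B ω = 0) (f : Ω → ℝ) :
    ∫ ω, B ω * f ω ∂μ = ∫ ω in s, f ω ∂μ := by
  rw [← integral_indicator hs]
  congr 1
  funext ω
  by_cases h : ω ∈ s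
  · simp [Set.indicator_apply, h, hB1 ω h]
  · simp [Set.indicator_apply, h, hB0 ω h]


/-- under the six conditional moment equations (a)–(f) defining the
outcome bridge functions `h2, h1, h0` and the treatment bridge functions
`q0, q1, q2` (with all relevant products integrable), the four identification
formulas `E[h0]`, `E[A q0 h1]`, `E[(1−A) q1 h2]` and `E[A Y q2]` coincide.
Conditional expectations given `A=a` are conditional expectations under the
conditional measure `μ[|{A=a}]`. -/
theorem stmt5
    {Ω : Type*} [mΩ : MeasurableSpace Ω] (μ : Measure Ω) [IsProbabilityMeasure μ]
    (A Y Z W M D X : Ω → ℝ)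
    (hA : Measurable A) (hY : Measurable Y) (hZ : Measurable Z) (hW : Measurable W)
    (hM : Measurable M) (hD : Measurable D) (hX : Measurable X)
    (hA01 : ∀ ω, A ω = 0 ∨ A ω = 1)
    (h2 : ℝ × ℝ × ℝ × ℝ → ℝ) (hh2 : Measurable h2)
    (hh2int : Integrable (fun ω => h2 (W ω, M ω, D ω, X ω)) μ)
    (h1 : ℝ × ℝ × ℝ → ℝ) (hh1 : Measurable h1)
    (hh1int : Integrable (fun ω => h1 (W ω, D ω, X ω)) μ)
    (h0 : ℝ × ℝ → ℝ) (hh0 : Measurable h0)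
    (hh0int : Integrable (fun ω => h0 (W ω, X ω)) μ)
    (q0 : ℝ × ℝ → ℝ) (hq0 : Measurable q0)
    (hq0int : Integrable (fun ω => q0 (Z ω, X ω)) μ)
    (q1 : ℝ × ℝ × ℝ → ℝ) (hq1 : Measurable q1)
    (hq1int : Integrable (fun ω => q1 (Z ω, D ω, X ω)) μ)
    (q2 : ℝ × ℝ × ℝ × ℝ → ℝ) (hq2 : Measurable q2)
    (hq2int : Integrable (fun ω => q2 (Z ω, M ω, D ω, X ω)) μ)
    (hYint : Integrable Y μ)
    -- σ-algebras generated by the indicated variables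
    (mMDZX mDZX mZX mWX mWDX mWMDX : MeasurableSpace Ω)
    (hmMDZX : mMDZX = MeasurableSpace.comap (fun ω => (M ω, D ω, Z ω, X ω)) inferInstance)
    (hmDZX : mDZX = MeasurableSpace.comap (fun ω => (D ω, Z ω, X ω)) inferInstance)
    (hmZX : mZX = MeasurableSpace.comap (fun ω => (Z ω, X ω)) inferInstance)
    (hmWX : mWX = MeasurableSpace.comap (fun ω => (W ω, X ω)) inferInstance)
    (hmWDX : mWDX = MeasurableSpace.comap (fun ω => (W ω, D ω, X ω)) inferInstance)
    (hmWMDX : mWMDX = MeasurableSpace.comap (fun ω => (W ω, M ω, D ω, X ω)) inferInstance)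
    -- (a) E[Y − h2 | A=1, M, D, Z, X] = 0
    (ha : ((μ[|{ω | A ω = 1}])[(fun ω => Y ω - h2 (W ω, M ω, D ω, X ω)) | mMDZX])
        =ᵐ[μ[|{ω | A ω = 1}]] 0)
    -- (b) E[h2 − h1 | A=0, D, Z, X] = 0
    (hb : ((μ[|{ω | A ω = 0}])[(fun ω => h2 (W ω, M ω, D ω, X ω) - h1 (W ω, D ω, X ω)) | mDZX])
        =ᵐ[μ[|{ω | A ω = 0}]] 0)
    -- (c) E[h1 − h0 | A=1, Z, X] = 0
    (hc : ((μ[|{ω | A ω = 1}])[(fun ω => h1 (W ω, D ω, X ω) - h0 (W ω, X ω)) | mZX])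
        =ᵐ[μ[|{ω | A ω = 1}]] 0)
    -- (d) E[A q0 − 1 | W, X] = 0
    (hd : (μ[(fun ω => A ω * q0 (Z ω, X ω) - 1) | mWX]) =ᵐ[μ] 0)
    -- (e) E[(1−A) q1 − A q0 | W, D, X] = 0
    (he : (μ[(fun ω => (1 - A ω) * q1 (Z ω, D ω, X ω) - A ω * q0 (Z ω, X ω)) | mWDX])
        =ᵐ[μ] 0)
    -- (f) E[A q2 − (1−A) q1 | W, M, D, X] = 0
    (hf : (μ[(fun ω => A ω * q2 (Z ω, M ω, D ω, X ω) - (1 - A ω) * q1 (Z ω, D ω, X ω)) | mWMDX])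
        =ᵐ[μ] 0)
    -- integrability of the relevant products
    (hi1 : Integrable (fun ω => A ω * q0 (Z ω, X ω) * h1 (W ω, D ω, X ω)) μ)
    (hi2 : Integrable (fun ω => A ω * q0 (Z ω, X ω) * h0 (W ω, X ω)) μ)
    (hi3 : Integrable (fun ω => (1 - A ω) * q1 (Z ω, D ω, X ω) * h2 (W ω, M ω, D ω, X ω)) μ)
    (hi4 : Integrable (fun ω => (1 - A ω) * q1 (Z ω, D ω, X ω) * h1 (W ω, D ω, X ω)) μ)
    (hi5 : Integrable (fun ω => A ω * q2 (Z ω, M ω, D ω, X ω) * h2 (W ω, M ω, D ω, X ω)) μ)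
    (hi6 : Integrable (fun ω => A ω * Y ω * q2 (Z ω, M ω, D ω, X ω)) μ) :
    (∫ ω, h0 (W ω, X ω) ∂μ
        = ∫ ω, A ω * q0 (Z ω, X ω) * h1 (W ω, D ω, X ω) ∂μ)
    ∧ (∫ ω, A ω * q0 (Z ω, X ω) * h1 (W ω, D ω, X ω) ∂μ
        = ∫ ω, (1 - A ω) * q1 (Z ω, D ω, X ω) * h2 (W ω, M ω, D ω, X ω) ∂μ)
    ∧ (∫ ω, (1 - A ω) * q1 (Z ω, D ω, X ω) * h2 (W ω, M ω, D ω, X ω) ∂μ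
        = ∫ ω, A ω * Y ω * q2 (Z ω, M ω, D ω, X ω) ∂μ) := by
  
  subst hmMDZX hmDZX hmZX hmWX hmWDX hmWMDX
  -- sets
  set s1 : Set Ω := {ω | A ω = 1} with hs1def
  set s0 : Set Ω := {ω | A ω = 0} with hs0def
  have hs1 : MeasurableSet s1 := hA (measurableSet_singleton 1)
  have hs0 : MeasurableSet s0 := hA (measurableSet_singleton 0)
  have hA1 : ∀ ω ∈ s1, A ω = 1 := fun ω hω => hω
  have hA1' : ∀ ω ∉ s1, A ω = 0 := fun ω hω => (hA01 ω).resolve_right hω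
  have hB1 : ∀ ω ∈ s0, 1 - A ω = 1 := fun ω hω => by
    have : A ω = 0 := hω; rw [this]; ring
  have hB1' : ∀ ω ∉ s0, 1 - A ω = 0 := fun ω hω => by
    have : A ω = 1 := (hA01 ω).resolve_left hω; rw [this]; ring
  -- σ-algebra inclusions
  have leWX : MeasurableSpace.comap (fun ω => (W ω, X ω)) inferInstance ≤ mΩ :=
    measurable_iff_comap_le.mp (hW.prodMk hX)
  have leZX : MeasurableSpace.comap (fun ω => (Z ω, X ω)) inferInstance ≤ mΩ :=
    measurable_iff_comap_le.mp (hZ.prodMk hX)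
  have leWDX : MeasurableSpace.comap (fun ω => (W ω, D ω, X ω)) inferInstance ≤ mΩ :=
    measurable_iff_comap_le.mp (hW.prodMk (hD.prodMk hX))
  have leDZX : MeasurableSpace.comap (fun ω => (D ω, Z ω, X ω)) inferInstance ≤ mΩ :=
    measurable_iff_comap_le.mp (hD.prodMk (hZ.prodMk hX))
  have leWMDX : MeasurableSpace.comap (fun ω => (W ω, M ω, D ω, X ω)) inferInstance ≤ mΩ :=
    measurable_iff_comap_le.mp (hW.prodMk (hM.prodMk (hD.prodMk hX)))
  have leMDZX : MeasurableSpace.comap (fun ω => (M ω, D ω, Z ω, X ω)) inferInstance ≤ mΩ :=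
    measurable_iff_comap_le.mp (hM.prodMk (hD.prodMk (hZ.prodMk hX)))
  -- strong measurability wrt the comap σ-algebras
  have smh0 : StronglyMeasurable[MeasurableSpace.comap (fun ω => (W ω, X ω)) inferInstance]
      (fun ω => h0 (W ω, X ω)) :=
    (hh0.comp (comap_measurable _)).stronglyMeasurable
  have smq0 : StronglyMeasurable[MeasurableSpace.comap (fun ω => (Z ω, X ω)) inferInstance]
      (fun ω => q0 (Z ω, X ω)) :=
    (hq0.comp (comap_measurable _)).stronglyMeasurable
  have smh1 : StronglyMeasurable[MeasurableSpace.comap (fun ω => (W ω, D ω, X ω)) inferInstance]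
      (fun ω => h1 (W ω, D ω, X ω)) :=
    (hh1.comp (comap_measurable _)).stronglyMeasurable
  have smq1 : StronglyMeasurable[MeasurableSpace.comap (fun ω => (D ω, Z ω, X ω)) inferInstance]
      (fun ω => q1 (Z ω, D ω, X ω)) :=
    ((hq1.comp ((measurable_snd.fst).prodMk
      ((measurable_fst).prodMk measurable_snd.snd))).comp
        (comap_measurable (fun ω => (D ω, Z ω, X ω)))).stronglyMeasurable
  have smh2 : StronglyMeasurable[MeasurableSpace.comap
      (fun ω => (W ω, M ω, D ω, X ω)) inferInstance]
      (fun ω => h2 (W ω, M ω, D ω, X ω)) :=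
    (hh2.comp (comap_measurable _)).stronglyMeasurable
  have smq2 : StronglyMeasurable[MeasurableSpace.comap
      (fun ω => (M ω, D ω, Z ω, X ω)) inferInstance]
      (fun ω => q2 (Z ω, M ω, D ω, X ω)) :=
    ((hq2.comp ((measurable_snd.snd.fst).prodMk ((measurable_fst).prodMk
      ((measurable_snd.fst).prodMk measurable_snd.snd.snd)))).comp
        (comap_measurable (fun ω => (M ω, D ω, Z ω, X ω)))).stronglyMeasurable
  -- basic integrability
  have hAbd : ∃ C, ∀ ω, ‖A ω‖ ≤ C :=
    ⟨1, fun ω => by rcases hA01 ω with h | h <;> simp [h]⟩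
  have hBbd : ∃ C, ∀ ω, ‖1 - A ω‖ ≤ C :=
    ⟨1, fun ω => by rcases hA01 ω with h | h <;> simp [h]⟩
  have hAq0 : Integrable (fun ω => A ω * q0 (Z ω, X ω)) μ :=
    hq0int.bdd_mul hA.aestronglyMeasurable (Filter.Eventually.of_forall hAbd.choose_spec)
  have hBq1 : Integrable (fun ω => (1 - A ω) * q1 (Z ω, D ω, X ω)) μ :=
    hq1int.bdd_mul (measurable_const.sub hA).aestronglyMeasurable (Filter.Eventually.of_forall hBbd.choose_spec)
  have hAq2 : Integrable (fun ω => A ω * q2 (Z ω, M ω, D ω, X ω)) μ :=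
    hq2int.bdd_mul hA.aestronglyMeasurable (Filter.Eventually.of_forall hAbd.choose_spec)
  -- Step (d): ∫ A q0 h0 = ∫ h0
  have stepd : ∫ ω, A ω * q0 (Z ω, X ω) * h0 (W ω, X ω) ∂μ = ∫ ω, h0 (W ω, X ω) ∂μ := by
    have k : ∫ ω, h0 (W ω, X ω) * (A ω * q0 (Z ω, X ω) - 1) ∂μ = 0 :=
      key_main leWX smh0 (hAq0.sub (integrable_const 1))
        ((hi2.sub hh0int).congr (Filter.Eventually.of_forall fun ω => by simp only [Pi.sub_apply]; ring)) hd
    have k2 : ∫ ω, (A ω * q0 (Z ω, X ω) * h0 (W ω, X ω) - h0 (W ω, X ω)) ∂μ = 0 := by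
      rw [← k]; exact integral_congr_ae (Filter.Eventually.of_forall fun ω => by ring)
    rw [integral_sub hi2 hh0int] at k2
    linarith
  -- Step (c): ∫ A q0 h1 = ∫ A q0 h0
  have stepc : ∫ ω, A ω * q0 (Z ω, X ω) * h1 (W ω, D ω, X ω) ∂μ
      = ∫ ω, A ω * q0 (Z ω, X ω) * h0 (W ω, X ω) ∂μ := by
    have hgf : Integrable
        (fun ω => q0 (Z ω, X ω) * (h1 (W ω, D ω, X ω) - h0 (W ω, X ω))) (μ.restrict s1) := by
      refine ((hi1.sub hi2).restrict).congr ?_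
      filter_upwards [ae_restrict_mem hs1] with ω hω
      have h : A ω = 1 := hω
      simp only [Pi.sub_apply]; rw [h]; ring
    have k : ∫ ω in s1, q0 (Z ω, X ω) * (h1 (W ω, D ω, X ω) - h0 (W ω, X ω)) ∂μ = 0 :=
      key_cond (mΩ := mΩ) leZX smq0 (hh1int.sub hh0int) hgf hc
    have k2 : ∫ ω, A ω * (q0 (Z ω, X ω) * (h1 (W ω, D ω, X ω) - h0 (W ω, X ω))) ∂μ = 0 := by
      exact (integral_indic_mul hs1 hA1 hA1' _).trans k
    have k3 : ∫ ω, (A ω * q0 (Z ω, X ω) * h1 (W ω, D ω, X ω)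
        - A ω * q0 (Z ω, X ω) * h0 (W ω, X ω)) ∂μ = 0 := by
      rw [← k2]; exact integral_congr_ae (Filter.Eventually.of_forall fun ω => by ring)
    rw [integral_sub hi1 hi2] at k3
    linarith
  -- Step (e): ∫ (1-A) q1 h1 = ∫ A q0 h1
  have stepe : ∫ ω, (1 - A ω) * q1 (Z ω, D ω, X ω) * h1 (W ω, D ω, X ω) ∂μ
      = ∫ ω, A ω * q0 (Z ω, X ω) * h1 (W ω, D ω, X ω) ∂μ := by
    have k : ∫ ω, h1 (W ω, D ω, X ω)
        * ((1 - A ω) * q1 (Z ω, D ω, X ω) - A ω * q0 (Z ω, X ω)) ∂μ = 0 :=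
      key_main leWDX smh1 (hBq1.sub hAq0)
        ((hi4.sub hi1).congr (Filter.Eventually.of_forall fun ω => by simp only [Pi.sub_apply]; ring)) he
    have k2 : ∫ ω, ((1 - A ω) * q1 (Z ω, D ω, X ω) * h1 (W ω, D ω, X ω)
        - A ω * q0 (Z ω, X ω) * h1 (W ω, D ω, X ω)) ∂μ = 0 := by
      rw [← k]; exact integral_congr_ae (Filter.Eventually.of_forall fun ω => by ring)
    rw [integral_sub hi4 hi1] at k2
    linarith
  -- Step (b): ∫ (1-A) q1 h2 = ∫ (1-A) q1 h1
  have stepb : ∫ ω, (1 - A ω) * q1 (Z ω, D ω, X ω) * h2 (W ω, M ω, D ω, X ω) ∂μ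
      = ∫ ω, (1 - A ω) * q1 (Z ω, D ω, X ω) * h1 (W ω, D ω, X ω) ∂μ := by
    have hgf : Integrable
        (fun ω => q1 (Z ω, D ω, X ω) * (h2 (W ω, M ω, D ω, X ω) - h1 (W ω, D ω, X ω)))
        (μ.restrict s0) := by
      refine ((hi3.sub hi4).restrict).congr ?_
      filter_upwards [ae_restrict_mem hs0] with ω hω
      have h : A ω = 0 := hω
      simp only [Pi.sub_apply]; rw [h]; ring
    have k : ∫ ω in s0,
        q1 (Z ω, D ω, X ω) * (h2 (W ω, M ω, D ω, X ω) - h1 (W ω, D ω, X ω)) ∂μ = 0 :=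
      key_cond (mΩ := mΩ) leDZX smq1 (hh2int.sub hh1int) hgf hb
    have k2 : ∫ ω, (1 - A ω)
        * (q1 (Z ω, D ω, X ω) * (h2 (W ω, M ω, D ω, X ω) - h1 (W ω, D ω, X ω))) ∂μ = 0 := by
      exact (integral_indic_mul hs0 hB1 hB1' _).trans k
    have k3 : ∫ ω, ((1 - A ω) * q1 (Z ω, D ω, X ω) * h2 (W ω, M ω, D ω, X ω)
        - (1 - A ω) * q1 (Z ω, D ω, X ω) * h1 (W ω, D ω, X ω)) ∂μ = 0 := by
      rw [← k2]; exact integral_congr_ae (Filter.Eventually.of_forall fun ω => by ring)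
    rw [integral_sub hi3 hi4] at k3
    linarith
  -- Step (f): ∫ A q2 h2 = ∫ (1-A) q1 h2
  have stepf : ∫ ω, A ω * q2 (Z ω, M ω, D ω, X ω) * h2 (W ω, M ω, D ω, X ω) ∂μ
      = ∫ ω, (1 - A ω) * q1 (Z ω, D ω, X ω) * h2 (W ω, M ω, D ω, X ω) ∂μ := by
    have k : ∫ ω, h2 (W ω, M ω, D ω, X ω)
        * (A ω * q2 (Z ω, M ω, D ω, X ω) - (1 - A ω) * q1 (Z ω, D ω, X ω)) ∂μ = 0 :=
      key_main leWMDX smh2 (hAq2.sub hBq1)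
        ((hi5.sub hi3).congr (Filter.Eventually.of_forall fun ω => by simp only [Pi.sub_apply]; ring)) hf
    have k2 : ∫ ω, (A ω * q2 (Z ω, M ω, D ω, X ω) * h2 (W ω, M ω, D ω, X ω)
        - (1 - A ω) * q1 (Z ω, D ω, X ω) * h2 (W ω, M ω, D ω, X ω)) ∂μ = 0 := by
      rw [← k]; exact integral_congr_ae (Filter.Eventually.of_forall fun ω => by ring)
    rw [integral_sub hi5 hi3] at k2
    linarith
  -- Step (a): ∫ A Y q2 = ∫ A q2 h2
  have stepa : ∫ ω, A ω * Y ω * q2 (Z ω, M ω, D ω, X ω) ∂μ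
      = ∫ ω, A ω * q2 (Z ω, M ω, D ω, X ω) * h2 (W ω, M ω, D ω, X ω) ∂μ := by
    have hgf : Integrable
        (fun ω => q2 (Z ω, M ω, D ω, X ω) * (Y ω - h2 (W ω, M ω, D ω, X ω)))
        (μ.restrict s1) := by
      refine ((hi6.sub hi5).restrict).congr ?_
      filter_upwards [ae_restrict_mem hs1] with ω hω
      have h : A ω = 1 := hω
      simp only [Pi.sub_apply]; rw [h]; ring
    have k : ∫ ω in s1,
        q2 (Z ω, M ω, D ω, X ω) * (Y ω - h2 (W ω, M ω, D ω, X ω)) ∂μ = 0 :=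
      key_cond (mΩ := mΩ) leMDZX smq2 (hYint.sub hh2int) hgf ha
    have k2 : ∫ ω, A ω
        * (q2 (Z ω, M ω, D ω, X ω) * (Y ω - h2 (W ω, M ω, D ω, X ω))) ∂μ = 0 := by
      exact (integral_indic_mul hs1 hA1 hA1' _).trans k
    have k3 : ∫ ω, (A ω * Y ω * q2 (Z ω, M ω, D ω, X ω)
        - A ω * q2 (Z ω, M ω, D ω, X ω) * h2 (W ω, M ω, D ω, X ω)) ∂μ = 0 := by
      rw [← k2]; exact integral_congr_ae (Filter.Eventually.of_forall fun ω => by ring)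
    rw [integral_sub hi6 hi5] at k3
    linarith
  refine ⟨by linarith, by linarith, by linarith⟩
end

section
/- Let A ∈ {0,1} and Y, Z, W, M, D, X be random variables, and suppose h2, h1, h0, q0, q1, q2 are integrable measurable functions of (W,M,D,X), (W,D,X), (W,X), (Z,X), (Z,D,X), (Z,M,D,X) respectively, satisfying the six conditional moment equations (a)–(f) of the proximal bridge system. Define ψ = E[h0(W,X)] and EIF = A·q0·(h1 − h0) + (1−A)·q1·(h2 − h1) + A·q2·(Y − h2) + h0 − ψ. Then E[EIF] = 0. -/
open MeasureTheory ProbabilityTheory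
open scoped MeasureTheory ProbabilityTheory


lemma key0 {Ω : Type*} [mΩ : MeasurableSpace Ω] (ν : Measure Ω)
    {m : MeasurableSpace Ω} (hm : m ≤ mΩ) [IsFiniteMeasure ν]
    (f g : Ω → ℝ) (hf : StronglyMeasurable[m] f)
    (hg : Integrable g ν) (hfg : Integrable (fun ω => f ω * g ω) ν)
    (hcond : ν[g|m] =ᵐ[ν] 0) :
    ∫ ω, f ω * g ω ∂ν = 0 := by
  haveI : SigmaFinite (ν.trim hm) := by infer_instance
  have hfg' : Integrable (f * g) ν := hfg
  have h1 : ∫ ω, f ω * g ω ∂ν = ∫ ω, (ν[f * g|m]) ω ∂ν :=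
    (integral_condExp hm).symm
  have h2 : ν[f * g|m] =ᵐ[ν] f * ν[g|m] :=
    condExp_mul_of_stronglyMeasurable_left hf hfg' hg
  have h3 : ν[f * g|m] =ᵐ[ν] 0 := by
    refine h2.trans ?_
    filter_upwards [hcond] with ω hω
    simp [Pi.mul_apply, hω, Pi.zero_apply]
  rw [h1, integral_congr_ae h3]
  simp

lemma term_zero {Ω : Type*} [mΩ : MeasurableSpace Ω] (μ : Measure Ω) [IsProbabilityMeasure μ]
    (s : Set Ω) (hs : MeasurableSet s)
    {m : MeasurableSpace Ω} (hm : m ≤ mΩ)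
    (f g : Ω → ℝ) (hf : StronglyMeasurable[m] f)
    (hgμ : Integrable g μ)
    (hfgres : Integrable (fun ω => f ω * g ω) (μ.restrict s))
    (hcond : (μ[|s])[g|m] =ᵐ[μ[|s]] 0) :
    ∫ ω in s, f ω * g ω ∂μ = 0 := by
  by_cases h0 : μ s = 0
  · have : μ.restrict s = 0 := Measure.restrict_eq_zero.mpr h0
    simp [this]
  · have hinv_ne_top : (μ s)⁻¹ ≠ ⊤ := ENNReal.inv_ne_top.mpr h0
    haveI : IsProbabilityMeasure (μ[|s]) := cond_isProbabilityMeasure h0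
    have hg' : Integrable g (μ[|s]) := (hgμ.restrict).smul_measure hinv_ne_top
    have hfg' : Integrable (fun ω => f ω * g ω) (μ[|s]) := hfgres.smul_measure hinv_ne_top
    have hkey := key0 (mΩ := mΩ) (μ[|s]) hm f g hf hg' hfg' hcond
    have hconv : μ[|s] = (μ s)⁻¹ • μ.restrict s := rfl
    rw [hconv, integral_smul_measure] at hkey
    have hne : ((μ s)⁻¹).toReal ≠ 0 := by
      rw [ENNReal.toReal_ne_zero]
      exact ⟨ENNReal.inv_ne_zero.mpr (measure_ne_top μ s), hinv_ne_top⟩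
    exact (smul_eq_zero.mp hkey).resolve_left hne

/-- when all six bridge equations (a)–(f) hold, the efficient
influence function `EIF = A q0 (h1 − h0) + (1−A) q1 (h2 − h1) + A q2 (Y − h2) + h0 − ψ`
with `ψ = E[h0(W,X)]` has mean zero: `E[EIF] = 0`. -/
theorem stmt6
    {Ω : Type*} [mΩ : MeasurableSpace Ω] (μ : Measure Ω) [IsProbabilityMeasure μ]
    (A Y Z W M D X : Ω → ℝ)
    (hA : Measurable A) (hY : Measurable Y) (hZ : Measurable Z) (hW : Measurable W)
    (hM : Measurable M) (hD : Measurable D) (hX : Measurable X)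
    (hA01 : ∀ ω, A ω = 0 ∨ A ω = 1)
    (h2 : ℝ × ℝ × ℝ × ℝ → ℝ) (hh2 : Measurable h2)
    (hh2int : Integrable (fun ω => h2 (W ω, M ω, D ω, X ω)) μ)
    (h1 : ℝ × ℝ × ℝ → ℝ) (hh1 : Measurable h1)
    (hh1int : Integrable (fun ω => h1 (W ω, D ω, X ω)) μ)
    (h0 : ℝ × ℝ → ℝ) (hh0 : Measurable h0)
    (hh0int : Integrable (fun ω => h0 (W ω, X ω)) μ)
    (q0 : ℝ × ℝ → ℝ) (hq0 : Measurable q0)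
    (hq0int : Integrable (fun ω => q0 (Z ω, X ω)) μ)
    (q1 : ℝ × ℝ × ℝ → ℝ) (hq1 : Measurable q1)
    (hq1int : Integrable (fun ω => q1 (Z ω, D ω, X ω)) μ)
    (q2 : ℝ × ℝ × ℝ × ℝ → ℝ) (hq2 : Measurable q2)
    (hq2int : Integrable (fun ω => q2 (Z ω, M ω, D ω, X ω)) μ)
    (hYint : Integrable Y μ)
    -- σ-algebras generated by the indicated variables
    (mMDZX mDZX mZX mWX mWDX mWMDX : MeasurableSpace Ω)
    (hmMDZX : mMDZX = MeasurableSpace.comap (fun ω => (M ω, D ω, Z ω, X ω)) inferInstance)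
    (hmDZX : mDZX = MeasurableSpace.comap (fun ω => (D ω, Z ω, X ω)) inferInstance)
    (hmZX : mZX = MeasurableSpace.comap (fun ω => (Z ω, X ω)) inferInstance)
    (hmWX : mWX = MeasurableSpace.comap (fun ω => (W ω, X ω)) inferInstance)
    (hmWDX : mWDX = MeasurableSpace.comap (fun ω => (W ω, D ω, X ω)) inferInstance)
    (hmWMDX : mWMDX = MeasurableSpace.comap (fun ω => (W ω, M ω, D ω, X ω)) inferInstance)
    -- (a) E[Y − h2 | A=1, M, D, Z, X] = 0
    (ha : ((μ[|{ω | A ω = 1}])[(fun ω => Y ω - h2 (W ω, M ω, D ω, X ω)) | mMDZX])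
        =ᵐ[μ[|{ω | A ω = 1}]] 0)
    -- (b) E[h2 − h1 | A=0, D, Z, X] = 0
    (hb : ((μ[|{ω | A ω = 0}])[(fun ω => h2 (W ω, M ω, D ω, X ω) - h1 (W ω, D ω, X ω)) | mDZX])
        =ᵐ[μ[|{ω | A ω = 0}]] 0)
    -- (c) E[h1 − h0 | A=1, Z, X] = 0
    (hc : ((μ[|{ω | A ω = 1}])[(fun ω => h1 (W ω, D ω, X ω) - h0 (W ω, X ω)) | mZX])
        =ᵐ[μ[|{ω | A ω = 1}]] 0)
    -- (d) E[A q0 − 1 | W, X] = 0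
    (hd : (μ[(fun ω => A ω * q0 (Z ω, X ω) - 1) | mWX]) =ᵐ[μ] 0)
    -- (e) E[(1−A) q1 − A q0 | W, D, X] = 0
    (he : (μ[(fun ω => (1 - A ω) * q1 (Z ω, D ω, X ω) - A ω * q0 (Z ω, X ω)) | mWDX])
        =ᵐ[μ] 0)
    -- (f) E[A q2 − (1−A) q1 | W, M, D, X] = 0
    (hf : (μ[(fun ω => A ω * q2 (Z ω, M ω, D ω, X ω) - (1 - A ω) * q1 (Z ω, D ω, X ω)) | mWMDX])
        =ᵐ[μ] 0)
    -- integrability of the relevant products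
    (hi1 : Integrable (fun ω => A ω * q0 (Z ω, X ω) * h1 (W ω, D ω, X ω)) μ)
    (hi2 : Integrable (fun ω => A ω * q0 (Z ω, X ω) * h0 (W ω, X ω)) μ)
    (hi3 : Integrable (fun ω => (1 - A ω) * q1 (Z ω, D ω, X ω) * h2 (W ω, M ω, D ω, X ω)) μ)
    (hi4 : Integrable (fun ω => (1 - A ω) * q1 (Z ω, D ω, X ω) * h1 (W ω, D ω, X ω)) μ)
    (hi5 : Integrable (fun ω => A ω * q2 (Z ω, M ω, D ω, X ω) * h2 (W ω, M ω, D ω, X ω)) μ)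
    (hi6 : Integrable (fun ω => A ω * Y ω * q2 (Z ω, M ω, D ω, X ω)) μ)
    (hi7 : Integrable (fun ω => A ω * q2 (Z ω, M ω, D ω, X ω) * h2 (W ω, M ω, D ω, X ω)) μ)
    (ψ : ℝ) (hψ : ψ = ∫ ω, h0 (W ω, X ω) ∂μ)
    (EIF : Ω → ℝ)
    (hEIF : ∀ ω, EIF ω =
      A ω * q0 (Z ω, X ω) * (h1 (W ω, D ω, X ω) - h0 (W ω, X ω))
        + (1 - A ω) * q1 (Z ω, D ω, X ω) * (h2 (W ω, M ω, D ω, X ω) - h1 (W ω, D ω, X ω))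
        + A ω * q2 (Z ω, M ω, D ω, X ω) * (Y ω - h2 (W ω, M ω, D ω, X ω))
        + h0 (W ω, X ω) - ψ) :
    ∫ ω, EIF ω ∂μ = 0 := by
  clear hd he hf hmWX hmWDX hmWMDX
  clear mWX mWDX mWMDX
  letI : MeasurableSpace Ω := mΩ
  set s1 : Set Ω := {ω | A ω = 1} with hs1def
  set s0 : Set Ω := {ω | A ω = 0} with hs0def
  have hms1 : MeasurableSet[mΩ] s1 := hA (measurableSet_singleton 1)
  have hms0 : MeasurableSet[mΩ] s0 := hA (measurableSet_singleton 0)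
  have hmZX_le : mZX ≤ mΩ := by
    rw [hmZX]; exact (hZ.prodMk hX).comap_le
  have hmDZX_le : mDZX ≤ mΩ := by
    rw [hmDZX]; exact (hD.prodMk (hZ.prodMk hX)).comap_le
  have hmMDZX_le : mMDZX ≤ mΩ := by
    rw [hmMDZX]; exact (hM.prodMk (hD.prodMk (hZ.prodMk hX))).comap_le
  have hp1 : Measurable[mZX] (fun ω => (Z ω, X ω)) := by
    rw [hmZX]; exact measurable_iff_comap_le.mpr le_rfl
  have hfq0 : StronglyMeasurable[mZX] (fun ω => q0 (Z ω, X ω)) :=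
    (hq0.comp hp1).stronglyMeasurable
  have hp2 : Measurable[mDZX] (fun ω => (D ω, Z ω, X ω)) := by
    rw [hmDZX]; exact measurable_iff_comap_le.mpr le_rfl
  have hr2 : Measurable (fun p : ℝ × ℝ × ℝ => (p.2.1, p.1, p.2.2)) := by fun_prop
  have hfq1 : StronglyMeasurable[mDZX] (fun ω => q1 (Z ω, D ω, X ω)) :=
    ((hq1.comp hr2).comp hp2).stronglyMeasurable
  have hp3 : Measurable[mMDZX] (fun ω => (M ω, D ω, Z ω, X ω)) := by
    rw [hmMDZX]; exact measurable_iff_comap_le.mpr le_rfl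
  have hr3 : Measurable (fun p : ℝ × ℝ × ℝ × ℝ => (p.2.2.1, p.1, p.2.1, p.2.2.2)) := by fun_prop
  have hfq2 : StronglyMeasurable[mMDZX] (fun ω => q2 (Z ω, M ω, D ω, X ω)) :=
    ((hq2.comp hr3).comp hp3).stronglyMeasurable
  -- Term 1 : E[A q0 (h1 - h0)] = 0, via (c)
  have E1 : ∫ ω, A ω * q0 (Z ω, X ω) * (h1 (W ω, D ω, X ω) - h0 (W ω, X ω)) ∂μ = 0 := by
    have hstep : ∫ ω, A ω * q0 (Z ω, X ω) * (h1 (W ω, D ω, X ω) - h0 (W ω, X ω)) ∂μ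
        = ∫ ω in s1, q0 (Z ω, X ω) * (h1 (W ω, D ω, X ω) - h0 (W ω, X ω)) ∂μ := by
      rw [← integral_indicator hms1]
      refine integral_congr_ae (Filter.Eventually.of_forall fun ω => ?_)
      beta_reduce
      by_cases hmem : ω ∈ s1
      · rw [Set.indicator_of_mem hmem]
        have hA1 : A ω = 1 := hmem
        rw [hA1, one_mul]
      · rw [Set.indicator_of_notMem hmem]
        have hA0 : A ω = 0 := (hA01 ω).resolve_right hmem
        rw [hA0, zero_mul, zero_mul]
    rw [hstep]
    refine term_zero μ s1 hms1 hmZX_le _ _ hfq0 (hh1int.sub hh0int) ?_ hc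
    refine ((hi1.sub hi2).restrict (s := s1)).congr ?_
    filter_upwards [ae_restrict_mem hms1] with ω hω
    have hA1 : A ω = 1 := hω
    simp only [Pi.sub_apply]
    rw [hA1]; ring
  -- Term 2 : E[(1-A) q1 (h2 - h1)] = 0, via (b)
  have E2 : ∫ ω, (1 - A ω) * q1 (Z ω, D ω, X ω)
      * (h2 (W ω, M ω, D ω, X ω) - h1 (W ω, D ω, X ω)) ∂μ = 0 := by
    have hstep : ∫ ω, (1 - A ω) * q1 (Z ω, D ω, X ω)
          * (h2 (W ω, M ω, D ω, X ω) - h1 (W ω, D ω, X ω)) ∂μ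
        = ∫ ω in s0, q1 (Z ω, D ω, X ω)
            * (h2 (W ω, M ω, D ω, X ω) - h1 (W ω, D ω, X ω)) ∂μ := by
      rw [← integral_indicator hms0]
      refine integral_congr_ae (Filter.Eventually.of_forall fun ω => ?_)
      beta_reduce
      by_cases hmem : ω ∈ s0
      · rw [Set.indicator_of_mem hmem]
        have hA0 : A ω = 0 := hmem
        rw [hA0]; ring
      · rw [Set.indicator_of_notMem hmem]
        have hA1 : A ω = 1 := (hA01 ω).resolve_left hmem
        rw [hA1]; ring
    rw [hstep]
    refine term_zero μ s0 hms0 hmDZX_le _ _ hfq1 (hh2int.sub hh1int) ?_ hb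
    refine ((hi3.sub hi4).restrict (s := s0)).congr ?_
    filter_upwards [ae_restrict_mem hms0] with ω hω
    have hA0 : A ω = 0 := hω
    simp only [Pi.sub_apply]
    rw [hA0]; ring
  -- Term 3 : E[A q2 (Y - h2)] = 0, via (a)
  have E3 : ∫ ω, A ω * q2 (Z ω, M ω, D ω, X ω)
      * (Y ω - h2 (W ω, M ω, D ω, X ω)) ∂μ = 0 := by
    have hstep : ∫ ω, A ω * q2 (Z ω, M ω, D ω, X ω)
          * (Y ω - h2 (W ω, M ω, D ω, X ω)) ∂μ
        = ∫ ω in s1, q2 (Z ω, M ω, D ω, X ω)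
            * (Y ω - h2 (W ω, M ω, D ω, X ω)) ∂μ := by
      rw [← integral_indicator hms1]
      refine integral_congr_ae (Filter.Eventually.of_forall fun ω => ?_)
      beta_reduce
      by_cases hmem : ω ∈ s1
      · rw [Set.indicator_of_mem hmem]
        have hA1 : A ω = 1 := hmem
        rw [hA1, one_mul]
      · rw [Set.indicator_of_notMem hmem]
        have hA0 : A ω = 0 := (hA01 ω).resolve_right hmem
        rw [hA0, zero_mul, zero_mul]
    rw [hstep]
    refine term_zero μ s1 hms1 hmMDZX_le _ _ hfq2 (hYint.sub hh2int) ?_ ha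
    refine ((hi6.sub hi7).restrict (s := s1)).congr ?_
    filter_upwards [ae_restrict_mem hms1] with ω hω
    have hA1 : A ω = 1 := hω
    simp only [Pi.sub_apply]
    rw [hA1]; ring
  -- integrability of the three terms
  have I1 : Integrable (fun ω => A ω * q0 (Z ω, X ω)
      * (h1 (W ω, D ω, X ω) - h0 (W ω, X ω))) μ := by
    refine (hi1.sub hi2).congr (Filter.Eventually.of_forall fun ω => ?_)
    simp only [Pi.sub_apply]; ring
  have I2 : Integrable (fun ω => (1 - A ω) * q1 (Z ω, D ω, X ω)
      * (h2 (W ω, M ω, D ω, X ω) - h1 (W ω, D ω, X ω))) μ := by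
    refine (hi3.sub hi4).congr (Filter.Eventually.of_forall fun ω => ?_)
    simp only [Pi.sub_apply]; ring
  have I3 : Integrable (fun ω => A ω * q2 (Z ω, M ω, D ω, X ω)
      * (Y ω - h2 (W ω, M ω, D ω, X ω))) μ := by
    refine (hi6.sub hi7).congr (Filter.Eventually.of_forall fun ω => ?_)
    simp only [Pi.sub_apply]; ring
  have I12 : Integrable (fun ω => A ω * q0 (Z ω, X ω) * (h1 (W ω, D ω, X ω) - h0 (W ω, X ω))
      + (1 - A ω) * q1 (Z ω, D ω, X ω) * (h2 (W ω, M ω, D ω, X ω) - h1 (W ω, D ω, X ω))) μ :=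
    I1.add I2
  have I123 : Integrable (fun ω => A ω * q0 (Z ω, X ω) * (h1 (W ω, D ω, X ω) - h0 (W ω, X ω))
      + (1 - A ω) * q1 (Z ω, D ω, X ω) * (h2 (W ω, M ω, D ω, X ω) - h1 (W ω, D ω, X ω))
      + A ω * q2 (Z ω, M ω, D ω, X ω) * (Y ω - h2 (W ω, M ω, D ω, X ω))) μ :=
    I12.add I3
  have Isum : Integrable (fun ω => A ω * q0 (Z ω, X ω) * (h1 (W ω, D ω, X ω) - h0 (W ω, X ω))
      + (1 - A ω) * q1 (Z ω, D ω, X ω) * (h2 (W ω, M ω, D ω, X ω) - h1 (W ω, D ω, X ω))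
      + A ω * q2 (Z ω, M ω, D ω, X ω) * (Y ω - h2 (W ω, M ω, D ω, X ω))
      + h0 (W ω, X ω)) μ :=
    I123.add hh0int
  have hrepr : ∫ ω, EIF ω ∂μ
      = ∫ ω, (A ω * q0 (Z ω, X ω) * (h1 (W ω, D ω, X ω) - h0 (W ω, X ω))
        + (1 - A ω) * q1 (Z ω, D ω, X ω) * (h2 (W ω, M ω, D ω, X ω) - h1 (W ω, D ω, X ω))
        + A ω * q2 (Z ω, M ω, D ω, X ω) * (Y ω - h2 (W ω, M ω, D ω, X ω))
        + h0 (W ω, X ω) - ψ) ∂μ :=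
    integral_congr_ae (Filter.Eventually.of_forall fun ω => hEIF ω)
  rw [hrepr, integral_sub Isum (integrable_const ψ), integral_add I123 hh0int,
    integral_add I12 I3, integral_add I1 I2, E1, E2, E3, integral_const]
  simp [hψ]
end

section
/- Let A ∈ {0,1} and Y, Z, W, M, D, X be random variables. Suppose q0(Z,X), q1(Z,D,X), q2(Z,M,D,X) are integrable measurable functions satisfying E[A·q0 − 1 | W,X] = 0, E[(1−A)·q1 − A·q0 | W,D,X] = 0, and E[A·q2 − (1−A)·q1 | W,M,D,X] = 0 almost surely. Then for ANY bounded measurable functions h2'(W,M,D,X), h1'(W,D,X), h0'(W,X), one has E[ A·q0·(h1' − h0') + (1−A)·q1·(h2' − h1') + A·q2·(Y − h2') + h0' ] = E[A·Y·q2]. -/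
open MeasureTheory ProbabilityTheory
open scoped MeasureTheory ProbabilityTheory

/-- Helper: if `μ[g|m] = 0` a.e. and `f` is `m`-strongly-measurable with `f*g` integrable,
then `∫ f * g = 0`. -/
lemma integral_mul_eq_zero_of_condexp_eq_zero
    {Ω : Type*} [m0 : MeasurableSpace Ω] (μ : Measure Ω) [IsProbabilityMeasure μ]
    {m : MeasurableSpace Ω} (hm : m ≤ m0) {g f : Ω → ℝ}
    (hg : Integrable g μ) (hf : StronglyMeasurable[m] f)
    (hfg : Integrable (f * g) μ) (h0 : μ[g|m] =ᵐ[μ] 0) :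
    ∫ ω, f ω * g ω ∂μ = 0 := by
  have h := condExp_mul_of_stronglyMeasurable_left hf hfg hg
  have h2 : μ[f * g|m] =ᵐ[μ] 0 := by
    refine h.trans ?_
    filter_upwards [h0] with ω hω
    simp [Pi.mul_apply, hω]
  have h3 : ∫ ω, (f * g) ω ∂μ = ∫ ω, (μ[f * g|m]) ω ∂μ :=
    (integral_condExp hm).symm
  calc ∫ ω, f ω * g ω ∂μ = ∫ ω, (f * g) ω ∂μ := rfl
    _ = ∫ ω, (μ[f * g|m]) ω ∂μ := h3
    _ = ∫ ω, (0 : Ω → ℝ) ω ∂μ := integral_congr_ae h2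
    _ = 0 := by simp

/-- if the treatment bridge functions `q0, q1, q2` satisfy their three
conditional moment equations, then for ANY bounded measurable `h2', h1', h0'` the
augmented functional equals the proximal IPW formula `E[A·Y·q2]`. -/
theorem stmt7
    {Ω : Type*} [mΩ : MeasurableSpace Ω] (μ : Measure Ω) [IsProbabilityMeasure μ]
    (A Y Z W M D X : Ω → ℝ)
    (hA : Measurable A) (hY : Measurable Y) (hZ : Measurable Z) (hW : Measurable W)
    (hM : Measurable M) (hD : Measurable D) (hX : Measurable X)
    (hA01 : ∀ ω, A ω = 0 ∨ A ω = 1)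
    (q0 : ℝ × ℝ → ℝ) (hq0 : Measurable q0)
    (hq0int : Integrable (fun ω => q0 (Z ω, X ω)) μ)
    (q1 : ℝ × ℝ × ℝ → ℝ) (hq1 : Measurable q1)
    (hq1int : Integrable (fun ω => q1 (Z ω, D ω, X ω)) μ)
    (q2 : ℝ × ℝ × ℝ × ℝ → ℝ) (hq2 : Measurable q2)
    (hq2int : Integrable (fun ω => q2 (Z ω, M ω, D ω, X ω)) μ)
    (mWX mWDX mWMDX : MeasurableSpace Ω)
    (hmWX : mWX = MeasurableSpace.comap (fun ω => (W ω, X ω)) inferInstance)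
    (hmWDX : mWDX = MeasurableSpace.comap (fun ω => (W ω, D ω, X ω)) inferInstance)
    (hmWMDX : mWMDX = MeasurableSpace.comap (fun ω => (W ω, M ω, D ω, X ω)) inferInstance)
    (hd : (μ[(fun ω => A ω * q0 (Z ω, X ω) - 1) | mWX]) =ᵐ[μ] 0)
    (he : (μ[(fun ω => (1 - A ω) * q1 (Z ω, D ω, X ω) - A ω * q0 (Z ω, X ω)) | mWDX])
        =ᵐ[μ] 0)
    (hf : (μ[(fun ω => A ω * q2 (Z ω, M ω, D ω, X ω) - (1 - A ω) * q1 (Z ω, D ω, X ω)) | mWMDX])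
        =ᵐ[μ] 0)
    (hAYq2 : Integrable (fun ω => A ω * Y ω * q2 (Z ω, M ω, D ω, X ω)) μ) :
    ∀ (h2' : ℝ × ℝ × ℝ × ℝ → ℝ) (h1' : ℝ × ℝ × ℝ → ℝ) (h0' : ℝ × ℝ → ℝ),
      Measurable h2' → (∃ C, ∀ p, |h2' p| ≤ C) →
      Measurable h1' → (∃ C, ∀ p, |h1' p| ≤ C) →
      Measurable h0' → (∃ C, ∀ p, |h0' p| ≤ C) →
      Integrable (fun ω =>
        A ω * q0 (Z ω, X ω) * (h1' (W ω, D ω, X ω) - h0' (W ω, X ω))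
          + (1 - A ω) * q1 (Z ω, D ω, X ω)
              * (h2' (W ω, M ω, D ω, X ω) - h1' (W ω, D ω, X ω))
          + A ω * q2 (Z ω, M ω, D ω, X ω) * (Y ω - h2' (W ω, M ω, D ω, X ω))
          + h0' (W ω, X ω)) μ →
      ∫ ω, (A ω * q0 (Z ω, X ω) * (h1' (W ω, D ω, X ω) - h0' (W ω, X ω))
          + (1 - A ω) * q1 (Z ω, D ω, X ω)
              * (h2' (W ω, M ω, D ω, X ω) - h1' (W ω, D ω, X ω))
          + A ω * q2 (Z ω, M ω, D ω, X ω) * (Y ω - h2' (W ω, M ω, D ω, X ω))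
          + h0' (W ω, X ω)) ∂μ
        = ∫ ω, A ω * Y ω * q2 (Z ω, M ω, D ω, X ω) ∂μ := by
  intro h2' h1' h0' hh2 ⟨C2, hC2⟩ hh1 ⟨C1, hC1⟩ hh0 ⟨C0, hC0⟩ _hint
  -- σ-algebra facts
  have hmWX_le : mWX ≤ mΩ := hmWX ▸ (hW.prodMk hX).comap_le
  have hmWDX_le : mWDX ≤ mΩ := hmWDX ▸ (hW.prodMk (hD.prodMk hX)).comap_le
  have hmWMDX_le : mWMDX ≤ mΩ :=
    hmWMDX ▸ (hW.prodMk (hM.prodMk (hD.prodMk hX))).comap_le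
  -- strong measurability of the h's w.r.t. the sub-σ-algebras
  have hsm0 : StronglyMeasurable[mWX] (fun ω => h0' (W ω, X ω)) := by
    rw [hmWX]
    exact (hh0.comp (comap_measurable _)).stronglyMeasurable
  have hsm1 : StronglyMeasurable[mWDX] (fun ω => h1' (W ω, D ω, X ω)) := by
    rw [hmWDX]
    exact (hh1.comp (comap_measurable _)).stronglyMeasurable
  have hsm2 : StronglyMeasurable[mWMDX] (fun ω => h2' (W ω, M ω, D ω, X ω)) := by
    rw [hmWMDX]
    exact (hh2.comp (comap_measurable _)).stronglyMeasurable
  -- A is bounded by 1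
  have hAbd : ∀ ω, ‖A ω‖ ≤ 1 := by
    intro ω; rcases hA01 ω with h | h <;> simp [h]
  have h1Abd : ∀ ω, ‖1 - A ω‖ ≤ 1 := by
    intro ω; rcases hA01 ω with h | h <;> simp [h]
  -- integrability of g1, g2, g3
  have hAq0 : Integrable (fun ω => A ω * q0 (Z ω, X ω)) μ :=
    hq0int.bdd_mul hA.aestronglyMeasurable (Filter.Eventually.of_forall hAbd)
  have h1Aq1 : Integrable (fun ω => (1 - A ω) * q1 (Z ω, D ω, X ω)) μ :=
    hq1int.bdd_mul ((measurable_const.sub hA)).aestronglyMeasurable (Filter.Eventually.of_forall h1Abd)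
  have hAq2 : Integrable (fun ω => A ω * q2 (Z ω, M ω, D ω, X ω)) μ :=
    hq2int.bdd_mul hA.aestronglyMeasurable (Filter.Eventually.of_forall hAbd)
  set g1 : Ω → ℝ := fun ω => A ω * q0 (Z ω, X ω) - 1 with hg1def
  set g2 : Ω → ℝ := fun ω => (1 - A ω) * q1 (Z ω, D ω, X ω) - A ω * q0 (Z ω, X ω)
    with hg2def
  set g3 : Ω → ℝ := fun ω => A ω * q2 (Z ω, M ω, D ω, X ω)
      - (1 - A ω) * q1 (Z ω, D ω, X ω) with hg3def
  have hg1 : Integrable g1 μ := hAq0.sub (integrable_const 1)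
  have hg2 : Integrable g2 μ := h1Aq1.sub hAq0
  have hg3 : Integrable g3 μ := hAq2.sub h1Aq1
  -- bounded-multiplier integrabilities
  have hb0 : ∀ ω, ‖(-(h0' (W ω, X ω)))‖ ≤ |C0| := by
    intro ω
    simpa [abs_le] using (hC0 (W ω, X ω)).trans (le_abs_self C0)
  have hb1 : ∀ ω, ‖(-(h1' (W ω, D ω, X ω)))‖ ≤ |C1| := by
    intro ω
    simpa [abs_le] using (hC1 (W ω, D ω, X ω)).trans (le_abs_self C1)
  have hb2 : ∀ ω, ‖(-(h2' (W ω, M ω, D ω, X ω)))‖ ≤ |C2| := by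
    intro ω
    simpa [abs_le] using (hC2 (W ω, M ω, D ω, X ω)).trans (le_abs_self C2)
  have hf0 : Integrable (fun ω => -(h0' (W ω, X ω)) * g1 ω) μ :=
    hg1.bdd_mul ((hh0.comp ((hW.prodMk hX))).neg).aestronglyMeasurable (Filter.Eventually.of_forall hb0)
  have hf1 : Integrable (fun ω => -(h1' (W ω, D ω, X ω)) * g2 ω) μ :=
    hg2.bdd_mul ((hh1.comp ((hW.prodMk (hD.prodMk hX)))).neg).aestronglyMeasurable
      (Filter.Eventually.of_forall hb1)
  have hf2 : Integrable (fun ω => -(h2' (W ω, M ω, D ω, X ω)) * g3 ω) μ :=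
    hg3.bdd_mul
      ((hh2.comp ((hW.prodMk (hM.prodMk (hD.prodMk hX))))).neg).aestronglyMeasurable
      (Filter.Eventually.of_forall hb2)
  -- three vanishing integrals
  have hz0 : ∫ ω, (-(h0' (W ω, X ω))) * g1 ω ∂μ = 0 :=
    integral_mul_eq_zero_of_condexp_eq_zero (m0 := mΩ) μ hmWX_le hg1 hsm0.neg hf0 hd
  have hz1 : ∫ ω, (-(h1' (W ω, D ω, X ω))) * g2 ω ∂μ = 0 :=
    integral_mul_eq_zero_of_condexp_eq_zero (m0 := mΩ) μ hmWDX_le hg2 hsm1.neg hf1 he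
  have hz2 : ∫ ω, (-(h2' (W ω, M ω, D ω, X ω))) * g3 ω ∂μ = 0 :=
    integral_mul_eq_zero_of_condexp_eq_zero (m0 := mΩ) μ hmWMDX_le hg3 hsm2.neg hf2 hf
  -- rewrite the integrand as a sum of four pieces
  have heq : ∀ ω,
      A ω * q0 (Z ω, X ω) * (h1' (W ω, D ω, X ω) - h0' (W ω, X ω))
        + (1 - A ω) * q1 (Z ω, D ω, X ω)
            * (h2' (W ω, M ω, D ω, X ω) - h1' (W ω, D ω, X ω))
        + A ω * q2 (Z ω, M ω, D ω, X ω) * (Y ω - h2' (W ω, M ω, D ω, X ω))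
        + h0' (W ω, X ω)
      = (-(h0' (W ω, X ω)) * g1 ω + -(h1' (W ω, D ω, X ω)) * g2 ω
          + -(h2' (W ω, M ω, D ω, X ω)) * g3 ω)
          + A ω * Y ω * q2 (Z ω, M ω, D ω, X ω) := by
    intro ω
    simp only [hg1def, hg2def, hg3def]
    ring
  rw [integral_congr_ae (Filter.Eventually.of_forall heq)]
  rw [integral_add (μ := μ)
      (f := fun a => -h0' (W a, X a) * g1 a + -h1' (W a, D a, X a) * g2 a
        + -h2' (W a, M a, D a, X a) * g3 a)
      (g := fun a => A a * Y a * q2 (Z a, M a, D a, X a))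
      ((hf0.add hf1).add hf2) hAYq2,
    integral_add (μ := μ)
      (f := fun a => -h0' (W a, X a) * g1 a + -h1' (W a, D a, X a) * g2 a)
      (g := fun a => -h2' (W a, M a, D a, X a) * g3 a)
      (hf0.add hf1) hf2,
    integral_add hf0 hf1, hz0, hz1, hz2]
  ring
end

section
/- Let A ∈ {0,1} and Y, Z, W, M, D, X be random variables. Suppose h2(W,M,D,X), h1(W,D,X), h0(W,X) are integrable measurable functions satisfying E[Y − h2 | A=1, M, D, Z, X] = 0, E[h2 − h1 | A=0, D, Z, X] = 0, and E[h1 − h0 | A=1, Z, X] = 0 almost surely. Then for ANY bounded measurable functions q0'(Z,X), q1'(Z,D,X), q2'(Z,M,D,X), one has E[ A·q0'·(h1 − h0) + (1−A)·q1'·(h2 − h1) + A·q2'·(Y − h2) + h0 ] = E[h0(W,X)]. -/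
open MeasureTheory ProbabilityTheory
open scoped MeasureTheory ProbabilityTheory


theorem aux_zero
    {Ω : Type*} [mΩ : MeasurableSpace Ω] (μ : Measure Ω) [IsProbabilityMeasure μ]
    {s : Set Ω} (hs : MeasurableSet s)
    {α : Type*} [MeasurableSpace α] {V : Ω → α} (hV : Measurable V)
    {g : α → ℝ} (hg : Measurable g) {C : ℝ} (hgb : ∀ p, |g p| ≤ C)
    {R : Ω → ℝ} (hR : Integrable R μ)
    (hce : (μ[|s])[R | MeasurableSpace.comap V inferInstance] =ᵐ[μ[|s]] 0) :
    ∫ ω in s, g (V ω) * R ω ∂μ = 0 := by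
  by_cases hs0 : μ s = 0
  · rw [Measure.restrict_eq_zero.mpr hs0, integral_zero_measure]
  · set ν := μ[|s] with hν
    haveI : IsProbabilityMeasure ν := cond_isProbabilityMeasure hs0
    set m : MeasurableSpace Ω := MeasurableSpace.comap V inferInstance with hm
    have hmle : m ≤ mΩ := hV.comap_le
    have hRν : Integrable R ν := by
      have : Integrable R (μ.restrict s) := hR.restrict
      exact this.smul_measure (by simp [ENNReal.inv_ne_top, hs0])
    have hgVm : Measurable[m] (fun ω => g (V ω)) :=
      hg.comp (Measurable.of_comap_le le_rfl)
    have hgVsm : StronglyMeasurable[m] (fun ω => g (V ω)) := hgVm.stronglyMeasurable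
    have hgVν : @AEStronglyMeasurable Ω ℝ _ mΩ mΩ (fun ω => g (V ω)) ν :=
      (hgVsm.mono hmle).aestronglyMeasurable
    have hprod : Integrable ((fun ω => g (V ω)) * R) ν :=
      hRν.bdd_mul (c := C) hgVν (ae_of_all _ fun x => by simpa [Real.norm_eq_abs] using hgb (V x))
    have hpull : ν[(fun ω => g (V ω)) * R | m] =ᵐ[ν] (fun ω => g (V ω)) * ν[R|m] :=
      condExp_mul_of_stronglyMeasurable_left hgVsm hprod hRν
    have hint0 : ∫ ω, g (V ω) * R ω ∂ν = 0 := by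
      have h1 : ∫ ω, g (V ω) * R ω ∂ν = ∫ ω, (ν[(fun ω => g (V ω)) * R | m]) ω ∂ν :=
        (integral_condExp hmle).symm
      rw [h1]
      have : ν[(fun ω => g (V ω)) * R | m] =ᵐ[ν] 0 := by
        filter_upwards [hpull, hce] with ω h1 h2
        simp [h1, h2]
      rw [integral_congr_ae this]; simp
    have hν_eq : ∫ ω, g (V ω) * R ω ∂ν
        = (μ s)⁻¹.toReal * ∫ ω in s, g (V ω) * R ω ∂μ := by
      rw [hν]; unfold ProbabilityTheory.cond; rw [integral_smul_measure]
      simp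
    rw [hν_eq] at hint0
    have hne : (μ s)⁻¹.toReal ≠ 0 := by
      simp [ENNReal.toReal_eq_zero_iff, hs0, ENNReal.inv_ne_top.mpr hs0,
        ENNReal.inv_eq_zero, (measure_lt_top μ s).ne]
    exact (mul_eq_zero.mp hint0).resolve_left hne


/-- if the outcome bridge functions `h2, h1, h0` satisfy their three
conditional moment equations (conditioning on the events `{A=1}` resp. `{A=0}`
encoded via conditional measures), then for ANY bounded measurable `q0', q1', q2'`
the augmented functional equals the proximal outcome regression formula `E[h0]`. -/
theorem stmt8
    {Ω : Type*} [mΩ : MeasurableSpace Ω] (μ : Measure Ω) [IsProbabilityMeasure μ]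
    (A Y Z W M D X : Ω → ℝ)
    (hA : Measurable A) (hY : Measurable Y) (hZ : Measurable Z) (hW : Measurable W)
    (hM : Measurable M) (hD : Measurable D) (hX : Measurable X)
    (hA01 : ∀ ω, A ω = 0 ∨ A ω = 1)
    (h2 : ℝ × ℝ × ℝ × ℝ → ℝ) (hh2 : Measurable h2)
    (hh2int : Integrable (fun ω => h2 (W ω, M ω, D ω, X ω)) μ)
    (h1 : ℝ × ℝ × ℝ → ℝ) (hh1 : Measurable h1)
    (hh1int : Integrable (fun ω => h1 (W ω, D ω, X ω)) μ)
    (h0 : ℝ × ℝ → ℝ) (hh0 : Measurable h0)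
    (hh0int : Integrable (fun ω => h0 (W ω, X ω)) μ)
    (hYint : Integrable Y μ)
    (mMDZX mDZX mZX : MeasurableSpace Ω)
    (hmMDZX : mMDZX = MeasurableSpace.comap (fun ω => (M ω, D ω, Z ω, X ω)) inferInstance)
    (hmDZX : mDZX = MeasurableSpace.comap (fun ω => (D ω, Z ω, X ω)) inferInstance)
    (hmZX : mZX = MeasurableSpace.comap (fun ω => (Z ω, X ω)) inferInstance)
    (ha : ((μ[|{ω | A ω = 1}])[(fun ω => Y ω - h2 (W ω, M ω, D ω, X ω)) | mMDZX])
        =ᵐ[μ[|{ω | A ω = 1}]] 0)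
    (hb : ((μ[|{ω | A ω = 0}])[(fun ω => h2 (W ω, M ω, D ω, X ω) - h1 (W ω, D ω, X ω)) | mDZX])
        =ᵐ[μ[|{ω | A ω = 0}]] 0)
    (hc : ((μ[|{ω | A ω = 1}])[(fun ω => h1 (W ω, D ω, X ω) - h0 (W ω, X ω)) | mZX])
        =ᵐ[μ[|{ω | A ω = 1}]] 0) :
    ∀ (q0' : ℝ × ℝ → ℝ) (q1' : ℝ × ℝ × ℝ → ℝ) (q2' : ℝ × ℝ × ℝ × ℝ → ℝ),
      Measurable q0' → (∃ C, ∀ p, |q0' p| ≤ C) →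
      Measurable q1' → (∃ C, ∀ p, |q1' p| ≤ C) →
      Measurable q2' → (∃ C, ∀ p, |q2' p| ≤ C) →
      ∫ ω, (A ω * q0' (Z ω, X ω) * (h1 (W ω, D ω, X ω) - h0 (W ω, X ω))
          + (1 - A ω) * q1' (Z ω, D ω, X ω)
              * (h2 (W ω, M ω, D ω, X ω) - h1 (W ω, D ω, X ω))
          + A ω * q2' (Z ω, M ω, D ω, X ω) * (Y ω - h2 (W ω, M ω, D ω, X ω))
          + h0 (W ω, X ω)) ∂μ
        = ∫ ω, h0 (W ω, X ω) ∂μ := by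

  subst hmMDZX; subst hmDZX; subst hmZX
  intro q0' q1' q2' hq0 hq0b hq1 hq1b hq2 hq2b
  obtain ⟨C0, hC0⟩ := hq0b
  obtain ⟨C1, hC1⟩ := hq1b
  obtain ⟨C2, hC2⟩ := hq2b
  set s1 : Set Ω := {ω | A ω = 1} with hs1def
  set s0 : Set Ω := {ω | A ω = 0} with hs0def
  have hs1 : MeasurableSet[mΩ] s1 := hA (measurableSet_singleton 1)
  have hs0 : MeasurableSet[mΩ] s0 := hA (measurableSet_singleton 0)
  -- residuals
  set R1 : Ω → ℝ := fun ω => h1 (W ω, D ω, X ω) - h0 (W ω, X ω) with hR1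
  set R2 : Ω → ℝ := fun ω => h2 (W ω, M ω, D ω, X ω) - h1 (W ω, D ω, X ω) with hR2
  set R3 : Ω → ℝ := fun ω => Y ω - h2 (W ω, M ω, D ω, X ω) with hR3
  have hR1i : Integrable R1 μ := hh1int.sub hh0int
  have hR2i : Integrable R2 μ := hh2int.sub hh1int
  have hR3i : Integrable R3 μ := hYint.sub hh2int
  have hAbd : ∀ ω, |A ω| ≤ 1 := fun ω => by rcases hA01 ω with h | h <;> simp [h]
  have h1Abd : ∀ ω, |1 - A ω| ≤ 1 := fun ω => by rcases hA01 ω with h | h <;> simp [h]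
  -- integrability of the three augmentation terms
  have ht1 : Integrable (fun ω => A ω * q0' (Z ω, X ω) * R1 ω) μ := by
    refine hR1i.bdd_mul ((hA.mul (hq0.comp (hZ.prodMk hX))).aestronglyMeasurable) (c := C0) (ae_of_all _ fun ω => ?_)
    calc ‖A ω * q0' (Z ω, X ω)‖ = |A ω| * |q0' (Z ω, X ω)| := abs_mul _ _
      _ ≤ 1 * C0 := mul_le_mul (hAbd ω) (hC0 _) (abs_nonneg _) zero_le_one
      _ = C0 := one_mul _
  have ht2 : Integrable (fun ω => (1 - A ω) * q1' (Z ω, D ω, X ω) * R2 ω) μ := by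
    refine hR2i.bdd_mul (((measurable_const.sub hA).mul
      (hq1.comp ((hZ.prodMk (hD.prodMk hX))))).aestronglyMeasurable) (c := C1) (ae_of_all _ fun ω => ?_)
    calc ‖(1 - A ω) * q1' (Z ω, D ω, X ω)‖ = |1 - A ω| * |q1' (Z ω, D ω, X ω)| := abs_mul _ _
      _ ≤ 1 * C1 := mul_le_mul (h1Abd ω) (hC1 _) (abs_nonneg _) zero_le_one
      _ = C1 := one_mul _
  have ht3 : Integrable (fun ω => A ω * q2' (Z ω, M ω, D ω, X ω) * R3 ω) μ := by
    refine hR3i.bdd_mul ((hA.mul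
      (hq2.comp ((hZ.prodMk (hM.prodMk (hD.prodMk hX)))))).aestronglyMeasurable)
      (c := C2) (ae_of_all _ fun ω => ?_)
    calc ‖A ω * q2' (Z ω, M ω, D ω, X ω)‖ = |A ω| * |q2' (Z ω, M ω, D ω, X ω)| := abs_mul _ _
      _ ≤ 1 * C2 := mul_le_mul (hAbd ω) (hC2 _) (abs_nonneg _) zero_le_one
      _ = C2 := one_mul _
  -- split the integral
  have hsplit : ∫ ω, (A ω * q0' (Z ω, X ω) * R1 ω
        + (1 - A ω) * q1' (Z ω, D ω, X ω) * R2 ω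
        + A ω * q2' (Z ω, M ω, D ω, X ω) * R3 ω
        + h0 (W ω, X ω)) ∂μ
      = (∫ ω, A ω * q0' (Z ω, X ω) * R1 ω ∂μ)
        + (∫ ω, (1 - A ω) * q1' (Z ω, D ω, X ω) * R2 ω ∂μ)
        + (∫ ω, A ω * q2' (Z ω, M ω, D ω, X ω) * R3 ω ∂μ)
        + ∫ ω, h0 (W ω, X ω) ∂μ := by
    have ht12 : Integrable (fun ω => A ω * q0' (Z ω, X ω) * R1 ω
        + (1 - A ω) * q1' (Z ω, D ω, X ω) * R2 ω) μ := ht1.add ht2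
    have ht123 : Integrable (fun ω => (A ω * q0' (Z ω, X ω) * R1 ω
        + (1 - A ω) * q1' (Z ω, D ω, X ω) * R2 ω)
        + A ω * q2' (Z ω, M ω, D ω, X ω) * R3 ω) μ := ht12.add ht3
    rw [← integral_add ht1 ht2, ← integral_add ht12 ht3, ← integral_add ht123 hh0int]
  rw [hsplit]
  -- each augmentation integral vanishes
  have key1 : ∫ ω, A ω * q0' (Z ω, X ω) * R1 ω ∂μ = 0 := by
    have e : (fun ω => A ω * q0' (Z ω, X ω) * R1 ω)
        = s1.indicator (fun ω => q0' ((fun ω => (Z ω, X ω)) ω) * R1 ω) := by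
      funext ω
      rcases hA01 ω with h | h
      · have : ω ∉ s1 := by simp [hs1def, h]
        simp [Set.indicator_of_notMem this, h]
      · have : ω ∈ s1 := by simp [hs1def, h]
        simp [Set.indicator_of_mem this, h]
    rw [e, integral_indicator hs1]
    refine aux_zero μ hs1 (hZ.prodMk hX) hq0 hC0 hR1i ?_
    exact hc
  have key2 : ∫ ω, (1 - A ω) * q1' (Z ω, D ω, X ω) * R2 ω ∂μ = 0 := by
    have e : (fun ω => (1 - A ω) * q1' (Z ω, D ω, X ω) * R2 ω)
        = s0.indicator (fun ω =>
            (fun p : ℝ × ℝ × ℝ => q1' (p.2.1, p.1, p.2.2)) ((fun ω => (D ω, Z ω, X ω)) ω)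
            * R2 ω) := by
      funext ω
      rcases hA01 ω with h | h
      · have : ω ∈ s0 := by simp [hs0def, h]
        simp [Set.indicator_of_mem this, h]
      · have : ω ∉ s0 := by simp [hs0def, h]
        simp [Set.indicator_of_notMem this, h]
    rw [e, integral_indicator hs0]
    refine aux_zero μ hs0 (hD.prodMk (hZ.prodMk hX))
      (g := fun p : ℝ × ℝ × ℝ => q1' (p.2.1, p.1, p.2.2)) (by fun_prop)
      (fun p => hC1 _) hR2i ?_
    exact hb
  have key3 : ∫ ω, A ω * q2' (Z ω, M ω, D ω, X ω) * R3 ω ∂μ = 0 := by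
    have e : (fun ω => A ω * q2' (Z ω, M ω, D ω, X ω) * R3 ω)
        = s1.indicator (fun ω =>
            (fun p : ℝ × ℝ × ℝ × ℝ => q2' (p.2.2.1, p.1, p.2.1, p.2.2.2))
              ((fun ω => (M ω, D ω, Z ω, X ω)) ω) * R3 ω) := by
      funext ω
      rcases hA01 ω with h | h
      · have : ω ∉ s1 := by simp [hs1def, h]
        simp [Set.indicator_of_notMem this, h]
      · have : ω ∈ s1 := by simp [hs1def, h]
        simp [Set.indicator_of_mem this, h]
    rw [e, integral_indicator hs1]
    refine aux_zero μ hs1 (hM.prodMk (hD.prodMk (hZ.prodMk hX)))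
      (g := fun p : ℝ × ℝ × ℝ × ℝ => q2' (p.2.2.1, p.1, p.2.1, p.2.2.2)) (by fun_prop)
      (fun p => hC2 _) hR3i ?_
    exact ha
  rw [key1, key2, key3]
  ring
end

section
/- Let A ∈ {0,1} and Y, Z, W, M, D, X be random variables. Suppose h2(W,M,D,X) and h1(W,D,X) are integrable measurable functions satisfying E[Y − h2 | A=1, M, D, Z, X] = 0 and E[h2 − h1 | A=0, D, Z, X] = 0 a.s., and q0(Z,X) is an integrable measurable function satisfying E[A·q0 − 1 | W, X] = 0 a.s. Then for ANY bounded measurable functions h0'(W,X), q1'(Z,D,X), q2'(Z,M,D,X), one has E[ A·q0·(h1 − h0') + (1−A)·q1'·(h2 − h1) + A·q2'·(Y − h2) + h0' ] = E[A·q0(Z,X)·h1(W,D,X)]. -/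
open MeasureTheory ProbabilityTheory
open scoped MeasureTheory ProbabilityTheory

/-- If `E[g | m] = 0` a.e. and `f` is `m`-measurable with `f*g` integrable, then
`∫ f*g = 0`. -/
lemma stmt9_key {Ω : Type*} [mΩ : MeasurableSpace Ω] (ν : Measure Ω) [IsFiniteMeasure ν]
    {m : MeasurableSpace Ω} (hm : m ≤ mΩ) {f g : Ω → ℝ}
    (hf : StronglyMeasurable[m] f) (hfg : Integrable (fun ω => f ω * g ω) ν)
    (hg : Integrable g ν) (h0 : ν[g|m] =ᵐ[ν] 0) :
    ∫ ω, f ω * g ω ∂ν = 0 := by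
  have h1 : ∫ ω, f ω * g ω ∂ν = ∫ ω, (ν[fun ω => f ω * g ω|m]) ω ∂ν :=
    (integral_condExp hm).symm
  have h2 : ν[fun ω => f ω * g ω|m] =ᵐ[ν] fun ω => f ω * (ν[g|m]) ω :=
    condExp_mul_of_stronglyMeasurable_left hf hfg hg
  have h3 : ν[fun ω => f ω * g ω|m] =ᵐ[ν] 0 :=
    h2.trans (h0.mono fun ω hω => by simp [hω])
  rw [h1, integral_congr_ae h3]; simp

lemma stmt9_restrict_eq {Ω : Type*} [mΩ : MeasurableSpace Ω] (μ : Measure Ω)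
    [IsFiniteMeasure μ] (s : Set Ω) (F : Ω → ℝ) :
    ∫ ω, F ω ∂(μ.restrict s) = (μ s).toReal * ∫ ω, F ω ∂(μ[|s]) := by
  rcases eq_or_ne (μ s) 0 with h | h
  · rw [Measure.restrict_eq_zero.mpr h]
    have : μ[|s] = (μ s)⁻¹ • μ.restrict s := rfl
    rw [this, Measure.restrict_eq_zero.mpr h]
    simp
  · have : μ[|s] = (μ s)⁻¹ • μ.restrict s := rfl
    rw [this, integral_smul_measure, ENNReal.toReal_inv, smul_eq_mul, ← mul_assoc,
      mul_inv_cancel₀ (ENNReal.toReal_ne_zero.mpr ⟨h, measure_ne_top μ s⟩), one_mul]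
/-- if `h2, h1` solve their outcome bridge equations and `q0` solves its
treatment bridge equation, then for ANY bounded measurable `h0', q1', q2'` the
augmented functional equals the hybrid formula `E[A·q0·h1]`. -/
theorem stmt9
    {Ω : Type*} [mΩ : MeasurableSpace Ω] (μ : Measure Ω) [IsProbabilityMeasure μ]
    (A Y Z W M D X : Ω → ℝ)
    (hA : Measurable A) (hY : Measurable Y) (hZ : Measurable Z) (hW : Measurable W)
    (hM : Measurable M) (hD : Measurable D) (hX : Measurable X)
    (hA01 : ∀ ω, A ω = 0 ∨ A ω = 1)
    (h2 : ℝ × ℝ × ℝ × ℝ → ℝ) (hh2 : Measurable h2)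
    (hh2int : Integrable (fun ω => h2 (W ω, M ω, D ω, X ω)) μ)
    (h1 : ℝ × ℝ × ℝ → ℝ) (hh1 : Measurable h1)
    (hh1int : Integrable (fun ω => h1 (W ω, D ω, X ω)) μ)
    (q0 : ℝ × ℝ → ℝ) (hq0 : Measurable q0)
    (hq0int : Integrable (fun ω => q0 (Z ω, X ω)) μ)
    (hYint : Integrable Y μ)
    (mMDZX mDZX mWX : MeasurableSpace Ω)
    (hmMDZX : mMDZX = MeasurableSpace.comap (fun ω => (M ω, D ω, Z ω, X ω)) inferInstance)
    (hmDZX : mDZX = MeasurableSpace.comap (fun ω => (D ω, Z ω, X ω)) inferInstance)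
    (hmWX : mWX = MeasurableSpace.comap (fun ω => (W ω, X ω)) inferInstance)
    -- E[Y − h2 | A=1, M, D, Z, X] = 0
    (ha : ((μ[|{ω | A ω = 1}])[(fun ω => Y ω - h2 (W ω, M ω, D ω, X ω)) | mMDZX])
        =ᵐ[μ[|{ω | A ω = 1}]] 0)
    -- E[h2 − h1 | A=0, D, Z, X] = 0
    (hb : ((μ[|{ω | A ω = 0}])[(fun ω => h2 (W ω, M ω, D ω, X ω) - h1 (W ω, D ω, X ω)) | mDZX])
        =ᵐ[μ[|{ω | A ω = 0}]] 0)
    -- E[A q0 − 1 | W, X] = 0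
    (hd : (μ[(fun ω => A ω * q0 (Z ω, X ω) - 1) | mWX]) =ᵐ[μ] 0)
    (hAq0h1 : Integrable (fun ω => A ω * q0 (Z ω, X ω) * h1 (W ω, D ω, X ω)) μ) :
    ∀ (h0' : ℝ × ℝ → ℝ) (q1' : ℝ × ℝ × ℝ → ℝ) (q2' : ℝ × ℝ × ℝ × ℝ → ℝ),
      Measurable h0' → (∃ C, ∀ p, |h0' p| ≤ C) →
      Measurable q1' → (∃ C, ∀ p, |q1' p| ≤ C) →
      Measurable q2' → (∃ C, ∀ p, |q2' p| ≤ C) →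
      Integrable (fun ω =>
        A ω * q0 (Z ω, X ω) * (h1 (W ω, D ω, X ω) - h0' (W ω, X ω))
          + (1 - A ω) * q1' (Z ω, D ω, X ω)
              * (h2 (W ω, M ω, D ω, X ω) - h1 (W ω, D ω, X ω))
          + A ω * q2' (Z ω, M ω, D ω, X ω) * (Y ω - h2 (W ω, M ω, D ω, X ω))
          + h0' (W ω, X ω)) μ →
      ∫ ω, (A ω * q0 (Z ω, X ω) * (h1 (W ω, D ω, X ω) - h0' (W ω, X ω))
          + (1 - A ω) * q1' (Z ω, D ω, X ω)
              * (h2 (W ω, M ω, D ω, X ω) - h1 (W ω, D ω, X ω))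
          + A ω * q2' (Z ω, M ω, D ω, X ω) * (Y ω - h2 (W ω, M ω, D ω, X ω))
          + h0' (W ω, X ω)) ∂μ
        = ∫ ω, A ω * q0 (Z ω, X ω) * h1 (W ω, D ω, X ω) ∂μ := by
  subst hmMDZX hmDZX hmWX
  intro h0' q1' q2' hmh0 hbh0 hmq1 hbq1 hmq2 hbq2 hint
  obtain ⟨C0, hC0⟩ := hbh0
  obtain ⟨C1, hC1⟩ := hbq1
  obtain ⟨C2, hC2⟩ := hbq2
  set s1 : Set Ω := {ω | A ω = 1} with hs1def
  set s0 : Set Ω := {ω | A ω = 0} with hs0def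
  have hs1 : MeasurableSet s1 := hA (measurableSet_singleton 1)
  have hs0 : MeasurableSet s0 := hA (measurableSet_singleton 0)
  set g2 : Ω → ℝ := fun ω =>
    q1' (Z ω, D ω, X ω) * (h2 (W ω, M ω, D ω, X ω) - h1 (W ω, D ω, X ω)) with hg2def
  set g3 : Ω → ℝ := fun ω =>
    q2' (Z ω, M ω, D ω, X ω) * (Y ω - h2 (W ω, M ω, D ω, X ω)) with hg3def
  set g0 : Ω → ℝ := fun ω =>
    h0' (W ω, X ω) * (A ω * q0 (Z ω, X ω) - 1) with hg0def
  -- measurability of composed functions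
  have hq1c : Measurable (fun ω => q1' (Z ω, D ω, X ω)) :=
    hmq1.comp (hZ.prodMk (hD.prodMk hX))
  have hq2c : Measurable (fun ω => q2' (Z ω, M ω, D ω, X ω)) :=
    hmq2.comp (hZ.prodMk (hM.prodMk (hD.prodMk hX)))
  have hh0c : Measurable (fun ω => h0' (W ω, X ω)) := hmh0.comp (hW.prodMk hX)
  -- integrability over μ
  have hg2int : Integrable g2 μ :=
    (hh2int.sub hh1int).bdd_mul hq1c.aestronglyMeasurable
      (c := C1) (Filter.Eventually.of_forall fun x => by simpa [Real.norm_eq_abs] using hC1 _)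
  have hg3int : Integrable g3 μ :=
    (hYint.sub hh2int).bdd_mul hq2c.aestronglyMeasurable
      (c := C2) (Filter.Eventually.of_forall fun x => by simpa [Real.norm_eq_abs] using hC2 _)
  have hAq0 : Integrable (fun ω => A ω * q0 (Z ω, X ω)) μ :=
    hq0int.bdd_mul hA.aestronglyMeasurable
      (c := 1) (Filter.Eventually.of_forall fun x => by rcases hA01 x with h | h <;> simp [h])
  have hAq0m1 : Integrable (fun ω => A ω * q0 (Z ω, X ω) - 1) μ :=
    hAq0.sub (integrable_const 1)
  have hg0int : Integrable g0 μ :=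
    hAq0m1.bdd_mul hh0c.aestronglyMeasurable
      (c := C0) (Filter.Eventually.of_forall fun x => by simpa [Real.norm_eq_abs] using hC0 _)
  -- the sub-σ-algebras are contained in mΩ
  have hle3 : MeasurableSpace.comap (fun ω => (M ω, D ω, Z ω, X ω)) inferInstance ≤ mΩ :=
    measurable_iff_comap_le.mp (hM.prodMk (hD.prodMk (hZ.prodMk hX)))
  have hle2 : MeasurableSpace.comap (fun ω => (D ω, Z ω, X ω)) inferInstance ≤ mΩ :=
    measurable_iff_comap_le.mp (hD.prodMk (hZ.prodMk hX))
  have hleW : MeasurableSpace.comap (fun ω => (W ω, X ω)) inferInstance ≤ mΩ :=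
    measurable_iff_comap_le.mp (hW.prodMk hX)
  -- strong measurability w.r.t. the sub-σ-algebras
  have hπ3 : Measurable[MeasurableSpace.comap (fun ω => (M ω, D ω, Z ω, X ω)) inferInstance]
      (fun ω => (M ω, D ω, Z ω, X ω)) := measurable_iff_comap_le.mpr le_rfl
  have hπ2 : Measurable[MeasurableSpace.comap (fun ω => (D ω, Z ω, X ω)) inferInstance]
      (fun ω => (D ω, Z ω, X ω)) := measurable_iff_comap_le.mpr le_rfl
  have hπW : Measurable[MeasurableSpace.comap (fun ω => (W ω, X ω)) inferInstance]
      (fun ω => (W ω, X ω)) := measurable_iff_comap_le.mpr le_rfl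
  have hsm3 : StronglyMeasurable[MeasurableSpace.comap
      (fun ω => (M ω, D ω, Z ω, X ω)) inferInstance] (fun ω => q2' (Z ω, M ω, D ω, X ω)) := by
    have h : Measurable (fun p : ℝ × ℝ × ℝ × ℝ => q2' (p.2.2.1, p.1, p.2.1, p.2.2.2)) :=
      hmq2.comp ((measurable_snd.snd.fst).prodMk ((measurable_fst).prodMk
        ((measurable_snd.fst).prodMk measurable_snd.snd.snd)))
    exact (h.comp hπ3).stronglyMeasurable
  have hsm2 : StronglyMeasurable[MeasurableSpace.comap
      (fun ω => (D ω, Z ω, X ω)) inferInstance] (fun ω => q1' (Z ω, D ω, X ω)) := by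
    have h : Measurable (fun p : ℝ × ℝ × ℝ => q1' (p.2.1, p.1, p.2.2)) :=
      hmq1.comp ((measurable_snd.fst).prodMk ((measurable_fst).prodMk measurable_snd.snd))
    exact (h.comp hπ2).stronglyMeasurable
  have hsmW : StronglyMeasurable[MeasurableSpace.comap
      (fun ω => (W ω, X ω)) inferInstance] (fun ω => h0' (W ω, X ω)) :=
    (hmh0.comp hπW).stronglyMeasurable
  -- the h0'-term vanishes
  have hz0 : ∫ ω, g0 ω ∂μ = 0 :=
    stmt9_key μ hleW hsmW hg0int hAq0m1 hd
  -- the q2'-term vanishes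
  have hz3 : ∫ ω, s1.indicator g3 ω ∂μ = 0 := by
    rw [integral_indicator hs1, stmt9_restrict_eq μ s1 g3]
    rcases eq_or_ne (μ s1) 0 with h | h
    · simp [h]
    · have hpm : IsProbabilityMeasure (μ[|s1]) := cond_isProbabilityMeasure h
      have hcond : μ[|s1] = (μ s1)⁻¹ • μ.restrict s1 := rfl
      have hint3 : Integrable g3 (μ[|s1]) := by
        rw [hcond]; exact (hg3int.restrict).smul_measure (ENNReal.inv_ne_top.mpr h)
      have hintg : Integrable (fun ω => Y ω - h2 (W ω, M ω, D ω, X ω)) (μ[|s1]) := by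
        rw [hcond]; exact ((hYint.sub hh2int).restrict).smul_measure (ENNReal.inv_ne_top.mpr h)
      rw [stmt9_key (μ[|s1]) hle3 hsm3 hint3 hintg ha, mul_zero]
  -- the q1'-term vanishes
  have hz2 : ∫ ω, s0.indicator g2 ω ∂μ = 0 := by
    rw [integral_indicator hs0, stmt9_restrict_eq μ s0 g2]
    rcases eq_or_ne (μ s0) 0 with h | h
    · simp [h]
    · have hpm : IsProbabilityMeasure (μ[|s0]) := cond_isProbabilityMeasure h
      have hcond : μ[|s0] = (μ s0)⁻¹ • μ.restrict s0 := rfl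
      have hint2 : Integrable g2 (μ[|s0]) := by
        rw [hcond]; exact (hg2int.restrict).smul_measure (ENNReal.inv_ne_top.mpr h)
      have hintg : Integrable
          (fun ω => h2 (W ω, M ω, D ω, X ω) - h1 (W ω, D ω, X ω)) (μ[|s0]) := by
        rw [hcond]; exact ((hh2int.sub hh1int).restrict).smul_measure (ENNReal.inv_ne_top.mpr h)
      rw [stmt9_key (μ[|s0]) hle2 hsm2 hint2 hintg hb, mul_zero]
  -- pointwise decomposition of the integrand
  have hpt : ∀ ω, A ω * q0 (Z ω, X ω) * (h1 (W ω, D ω, X ω) - h0' (W ω, X ω))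
      + (1 - A ω) * q1' (Z ω, D ω, X ω) * (h2 (W ω, M ω, D ω, X ω) - h1 (W ω, D ω, X ω))
      + A ω * q2' (Z ω, M ω, D ω, X ω) * (Y ω - h2 (W ω, M ω, D ω, X ω))
      + h0' (W ω, X ω)
      = A ω * q0 (Z ω, X ω) * h1 (W ω, D ω, X ω) - g0 ω
          + s0.indicator g2 ω + s1.indicator g3 ω := by
    intro ω
    rcases hA01 ω with h | h
    · have hmem0 : ω ∈ s0 := by simp [hs0def, h]
      have hmem1 : ω ∉ s1 := by simp [hs1def, h]
      rw [Set.indicator_of_mem hmem0, Set.indicator_of_notMem hmem1]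
      simp only [hg0def, hg2def, h]
      ring
    · have hmem0 : ω ∉ s0 := by simp [hs0def, h]
      have hmem1 : ω ∈ s1 := by simp [hs1def, h]
      rw [Set.indicator_of_notMem hmem0, Set.indicator_of_mem hmem1]
      simp only [hg0def, hg3def, h]
      ring
  have I1 : Integrable (fun ω => A ω * q0 (Z ω, X ω) * h1 (W ω, D ω, X ω) - g0 ω) μ :=
    hAq0h1.sub hg0int
  have I2 : Integrable
      (fun ω => A ω * q0 (Z ω, X ω) * h1 (W ω, D ω, X ω) - g0 ω + s0.indicator g2 ω) μ :=
    I1.add (hg2int.indicator hs0)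
  rw [integral_congr_ae (Filter.Eventually.of_forall hpt),
    integral_add I2 (hg3int.indicator hs1),
    integral_add I1 (hg2int.indicator hs0),
    integral_sub hAq0h1 hg0int, hz0, hz2, hz3]
  ring
end

section
/- Let A ∈ {0,1} and Y, Z, W, M, D, X be random variables. Suppose h2(W,M,D,X) is an integrable measurable function satisfying E[Y − h2 | A=1, M, D, Z, X] = 0 a.s., and q0(Z,X), q1(Z,D,X) are integrable measurable functions satisfying E[A·q0 − 1 | W, X] = 0 and E[(1−A)·q1 − A·q0 | W, D, X] = 0 a.s. Then for ANY bounded measurable functions h1'(W,D,X), h0'(W,X), q2'(Z,M,D,X), one has E[ A·q0·(h1' − h0') + (1−A)·q1·(h2 − h1') + A·q2'·(Y − h2) + h0' ] = E[(1−A)·q1(Z,D,X)·h2(W,M,D,X)]. -/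
open MeasureTheory ProbabilityTheory
open scoped MeasureTheory ProbabilityTheory

lemma aux_int_mul_eq_zero {Ω : Type*} {m : MeasurableSpace Ω} [mΩ : MeasurableSpace Ω]
    (hm : m ≤ mΩ) (ν : Measure Ω) [IsFiniteMeasure ν] {f g : Ω → ℝ}
    (hf : StronglyMeasurable[m] f) (C : ℝ) (hfb : ∀ x, ‖f x‖ ≤ C)
    (hg : Integrable g ν) (h0 : ν[g|m] =ᵐ[ν] 0) :
    ∫ x, f x * g x ∂ν = 0 := by
  have hfg : Integrable (fun x => f x * g x) ν :=
    Integrable.bdd_mul hg ((hf.mono hm).aestronglyMeasurable) (Filter.Eventually.of_forall hfb)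
  have h1 : ν[(fun x => f x * g x)|m] =ᵐ[ν] fun x => f x * (ν[g|m]) x :=
    condExp_mul_of_stronglyMeasurable_left hf hfg hg
  have h2 : ν[(fun x => f x * g x)|m] =ᵐ[ν] 0 := by
    refine h1.trans ?_
    filter_upwards [h0] with x hx
    simp only [Pi.zero_apply] at hx ⊢
    simp [hx]
  rw [← integral_condExp hm, integral_congr_ae h2]; simp


open MeasureTheory ProbabilityTheory
open scoped MeasureTheory ProbabilityTheory

/-- if `h2` solves its outcome bridge equation and `q0, q1` solve their
treatment bridge equations, then for ANY bounded measurable `h1', h0', q2'` the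
augmented functional equals the hybrid formula `E[(1−A)·q1·h2]`. -/
theorem stmt10
    {Ω : Type*} [mΩ : MeasurableSpace Ω] (μ : Measure Ω) [IsProbabilityMeasure μ]
    (A Y Z W M D X : Ω → ℝ)
    (hA : Measurable A) (hY : Measurable Y) (hZ : Measurable Z) (hW : Measurable W)
    (hM : Measurable M) (hD : Measurable D) (hX : Measurable X)
    (hA01 : ∀ ω, A ω = 0 ∨ A ω = 1)
    (h2 : ℝ × ℝ × ℝ × ℝ → ℝ) (hh2 : Measurable h2)
    (hh2int : Integrable (fun ω => h2 (W ω, M ω, D ω, X ω)) μ)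
    (q0 : ℝ × ℝ → ℝ) (hq0 : Measurable q0)
    (hq0int : Integrable (fun ω => q0 (Z ω, X ω)) μ)
    (q1 : ℝ × ℝ × ℝ → ℝ) (hq1 : Measurable q1)
    (hq1int : Integrable (fun ω => q1 (Z ω, D ω, X ω)) μ)
    (hYint : Integrable Y μ)
    (mMDZX mWX mWDX : MeasurableSpace Ω)
    (hmMDZX : mMDZX = MeasurableSpace.comap (fun ω => (M ω, D ω, Z ω, X ω)) inferInstance)
    (hmWX : mWX = MeasurableSpace.comap (fun ω => (W ω, X ω)) inferInstance)
    (hmWDX : mWDX = MeasurableSpace.comap (fun ω => (W ω, D ω, X ω)) inferInstance)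
    -- E[Y − h2 | A=1, M, D, Z, X] = 0
    (ha : ((μ[|{ω | A ω = 1}])[(fun ω => Y ω - h2 (W ω, M ω, D ω, X ω)) | mMDZX])
        =ᵐ[μ[|{ω | A ω = 1}]] 0)
    -- E[A q0 − 1 | W, X] = 0
    (hd : (μ[(fun ω => A ω * q0 (Z ω, X ω) - 1) | mWX]) =ᵐ[μ] 0)
    -- E[(1−A) q1 − A q0 | W, D, X] = 0
    (he : (μ[(fun ω => (1 - A ω) * q1 (Z ω, D ω, X ω) - A ω * q0 (Z ω, X ω)) | mWDX])
        =ᵐ[μ] 0)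
    (hq1h2 : Integrable (fun ω =>
        (1 - A ω) * q1 (Z ω, D ω, X ω) * h2 (W ω, M ω, D ω, X ω)) μ) :
    ∀ (h1' : ℝ × ℝ × ℝ → ℝ) (h0' : ℝ × ℝ → ℝ) (q2' : ℝ × ℝ × ℝ × ℝ → ℝ),
      Measurable h1' → (∃ C, ∀ p, |h1' p| ≤ C) →
      Measurable h0' → (∃ C, ∀ p, |h0' p| ≤ C) →
      Measurable q2' → (∃ C, ∀ p, |q2' p| ≤ C) →
      Integrable (fun ω =>
        A ω * q0 (Z ω, X ω) * (h1' (W ω, D ω, X ω) - h0' (W ω, X ω))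
          + (1 - A ω) * q1 (Z ω, D ω, X ω)
              * (h2 (W ω, M ω, D ω, X ω) - h1' (W ω, D ω, X ω))
          + A ω * q2' (Z ω, M ω, D ω, X ω) * (Y ω - h2 (W ω, M ω, D ω, X ω))
          + h0' (W ω, X ω)) μ →
      ∫ ω, (A ω * q0 (Z ω, X ω) * (h1' (W ω, D ω, X ω) - h0' (W ω, X ω))
          + (1 - A ω) * q1 (Z ω, D ω, X ω)
              * (h2 (W ω, M ω, D ω, X ω) - h1' (W ω, D ω, X ω))
          + A ω * q2' (Z ω, M ω, D ω, X ω) * (Y ω - h2 (W ω, M ω, D ω, X ω))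
          + h0' (W ω, X ω)) ∂μ
        = ∫ ω, (1 - A ω) * q1 (Z ω, D ω, X ω) * h2 (W ω, M ω, D ω, X ω) ∂μ := by
  intro h1' h0' q2' mh1 hb1 mh0 hb0 mq2 hb2 hint
  obtain ⟨C1, hC1⟩ := hb1
  obtain ⟨C0, hC0⟩ := hb0
  obtain ⟨C2, hC2⟩ := hb2
  have hC2nn : 0 ≤ C2 := le_trans (abs_nonneg _) (hC2 (0, 0, 0, 0))
  have hWDXm : Measurable[mΩ] fun ω => (W ω, D ω, X ω) := hW.prod (hD.prod hX)
  have hWXm : Measurable[mΩ] fun ω => (W ω, X ω) := hW.prod hX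
  have hMDZXm : Measurable[mΩ] fun ω => (M ω, D ω, Z ω, X ω) := hM.prod (hD.prod (hZ.prod hX))
  have hZMDXm : Measurable[mΩ] fun ω => (Z ω, M ω, D ω, X ω) := hZ.prod (hM.prod (hD.prod hX))
  have hle1 : mWDX ≤ mΩ := hmWDX ▸ measurable_iff_comap_le.mp hWDXm
  have hle0 : mWX ≤ mΩ := hmWX ▸ measurable_iff_comap_le.mp hWXm
  have hle2 : mMDZX ≤ mΩ := hmMDZX ▸ measurable_iff_comap_le.mp hMDZXm
  have hφ1m : StronglyMeasurable[mWDX] (fun ω => h1' (W ω, D ω, X ω)) := by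
    rw [hmWDX]
    exact (mh1.comp (Measurable.of_comap_le le_rfl)).stronglyMeasurable
  have hφ0m : StronglyMeasurable[mWX] (fun ω => h0' (W ω, X ω)) := by
    rw [hmWX]
    exact (mh0.comp (Measurable.of_comap_le le_rfl)).stronglyMeasurable
  have hψm : StronglyMeasurable[mMDZX] (fun ω => q2' (Z ω, M ω, D ω, X ω)) := by
    rw [hmMDZX]
    have hr : Measurable (fun p : ℝ × ℝ × ℝ × ℝ => (p.2.2.1, p.1, p.2.1, p.2.2.2)) := by
      fun_prop
    exact ((mq2.comp hr).comp (Measurable.of_comap_le le_rfl)).stronglyMeasurable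
  have bφ1 : ∀ x, ‖h1' (W x, D x, X x)‖ ≤ C1 := by
    intro x; rw [Real.norm_eq_abs]; exact hC1 _
  have bφ0 : ∀ x, ‖h0' (W x, X x)‖ ≤ C0 := by
    intro x; rw [Real.norm_eq_abs]; exact hC0 _
  have bψ : ∀ x, ‖q2' (Z x, M x, D x, X x)‖ ≤ C2 := by
    intro x; rw [Real.norm_eq_abs]; exact hC2 _
  have hAbd : ∀ ω, ‖A ω‖ ≤ 1 := by intro ω; rcases hA01 ω with h | h <;> simp [h]
  have h1Abd : ∀ ω, ‖(1 : ℝ) - A ω‖ ≤ 1 := by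
    intro ω; rcases hA01 ω with h | h <;> simp [h]
  have bAψ : ∀ ω, ‖A ω * q2' (Z ω, M ω, D ω, X ω)‖ ≤ C2 := by
    intro ω
    rw [Real.norm_eq_abs, abs_mul]
    rcases hA01 ω with h | h
    · simp [h, hC2nn]
    · simp [h]; exact hC2 _
  have hAq0 : Integrable (fun ω => A ω * q0 (Z ω, X ω)) μ :=
    hq0int.bdd_mul hA.aestronglyMeasurable (Filter.Eventually.of_forall hAbd)
  have h1Aq1 : Integrable (fun ω => (1 - A ω) * q1 (Z ω, D ω, X ω)) μ :=
    hq1int.bdd_mul ((measurable_const.sub hA).aestronglyMeasurable) (Filter.Eventually.of_forall h1Abd)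
  have hge : Integrable
      (fun ω => (1 - A ω) * q1 (Z ω, D ω, X ω) - A ω * q0 (Z ω, X ω)) μ := h1Aq1.sub hAq0
  have hgd : Integrable (fun ω => A ω * q0 (Z ω, X ω) - 1) μ :=
    hAq0.sub (integrable_const 1)
  have hg3 : Integrable (fun ω => Y ω - h2 (W ω, M ω, D ω, X ω)) μ := hYint.sub hh2int
  have Ze : ∫ ω, h1' (W ω, D ω, X ω)
      * ((1 - A ω) * q1 (Z ω, D ω, X ω) - A ω * q0 (Z ω, X ω)) ∂μ = 0 :=
    aux_int_mul_eq_zero (mΩ := mΩ) hle1 μ hφ1m C1 bφ1 hge he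
  have Zd : ∫ ω, h0' (W ω, X ω) * (A ω * q0 (Z ω, X ω) - 1) ∂μ = 0 :=
    aux_int_mul_eq_zero (mΩ := mΩ) hle0 μ hφ0m C0 bφ0 hgd hd
  have Z3 : ∫ ω, A ω * q2' (Z ω, M ω, D ω, X ω)
      * (Y ω - h2 (W ω, M ω, D ω, X ω)) ∂μ = 0 := by
    have hs : MeasurableSet[mΩ] {ω | A ω = 1} := hA (measurableSet_singleton 1)
    have hpt : (fun ω => A ω * q2' (Z ω, M ω, D ω, X ω)
          * (Y ω - h2 (W ω, M ω, D ω, X ω)))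
        = Set.indicator {ω | A ω = 1}
            (fun ω => q2' (Z ω, M ω, D ω, X ω) * (Y ω - h2 (W ω, M ω, D ω, X ω))) := by
      funext ω
      rw [Set.indicator_apply]
      simp only [Set.mem_setOf_eq]
      by_cases hω : A ω = 1
      · rw [if_pos hω, hω, one_mul]
      · rw [if_neg hω, (hA01 ω).resolve_right hω]; ring
    rw [hpt, @MeasureTheory.integral_indicator Ω ℝ mΩ _ _
      (fun ω => q2' (Z ω, M ω, D ω, X ω) * (Y ω - h2 (W ω, M ω, D ω, X ω)))
      {ω | A ω = 1} μ hs]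
    by_cases hne : μ {ω | A ω = 1} = 0
    · rw [Measure.restrict_eq_zero.mpr hne, integral_zero_measure]
    · haveI : IsProbabilityMeasure (μ[|{ω | A ω = 1}]) := cond_isProbabilityMeasure hne
      have hνdef : μ[|{ω | A ω = 1}]
          = (μ {ω | A ω = 1})⁻¹ • μ.restrict {ω | A ω = 1} := rfl
      have hginv : (μ {ω | A ω = 1})⁻¹ ≠ ⊤ := ENNReal.inv_ne_top.mpr hne
      have hgν : Integrable (fun ω => Y ω - h2 (W ω, M ω, D ω, X ω))
          (μ[|{ω | A ω = 1}]) := by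
        rw [hνdef]; exact (hg3.restrict).smul_measure hginv
      have h0ν : ∫ ω, q2' (Z ω, M ω, D ω, X ω)
          * (Y ω - h2 (W ω, M ω, D ω, X ω)) ∂(μ[|{ω | A ω = 1}]) = 0 :=
        aux_int_mul_eq_zero (mΩ := mΩ) hle2 _ hψm C2 bψ hgν ha
      have hsmul : ∫ ω, q2' (Z ω, M ω, D ω, X ω)
            * (Y ω - h2 (W ω, M ω, D ω, X ω)) ∂(μ[|{ω | A ω = 1}])
          = ((μ {ω | A ω = 1})⁻¹).toReal
            • ∫ ω in {ω | A ω = 1}, q2' (Z ω, M ω, D ω, X ω)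
                * (Y ω - h2 (W ω, M ω, D ω, X ω)) ∂μ := by
        rw [hνdef, integral_smul_measure]
      have hc : ((μ {ω | A ω = 1})⁻¹).toReal ≠ 0 := by
        simp [ENNReal.toReal_eq_zero_iff, ENNReal.inv_eq_zero, ENNReal.inv_eq_top, hne,
          measure_ne_top]
      exact (smul_eq_zero.mp (hsmul.symm.trans h0ν)).resolve_left hc
  have it1 := hq1h2
  have it2 : Integrable (fun ω => -(h1' (W ω, D ω, X ω)
      * ((1 - A ω) * q1 (Z ω, D ω, X ω) - A ω * q0 (Z ω, X ω)))) μ :=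
    (hge.bdd_mul ((mh1.comp hWDXm).aestronglyMeasurable) (Filter.Eventually.of_forall bφ1)).neg
  have it3 : Integrable (fun ω => -(h0' (W ω, X ω) * (A ω * q0 (Z ω, X ω) - 1))) μ :=
    (hgd.bdd_mul ((mh0.comp hWXm).aestronglyMeasurable) (Filter.Eventually.of_forall bφ0)).neg
  have it4 : Integrable (fun ω => A ω * q2' (Z ω, M ω, D ω, X ω)
      * (Y ω - h2 (W ω, M ω, D ω, X ω))) μ :=
    hg3.bdd_mul ((hA.mul (mq2.comp hZMDXm)).aestronglyMeasurable) (Filter.Eventually.of_forall bAψ)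
  have hsplit : (fun ω => A ω * q0 (Z ω, X ω) * (h1' (W ω, D ω, X ω) - h0' (W ω, X ω))
          + (1 - A ω) * q1 (Z ω, D ω, X ω)
              * (h2 (W ω, M ω, D ω, X ω) - h1' (W ω, D ω, X ω))
          + A ω * q2' (Z ω, M ω, D ω, X ω) * (Y ω - h2 (W ω, M ω, D ω, X ω))
          + h0' (W ω, X ω))
      = fun ω => (1 - A ω) * q1 (Z ω, D ω, X ω) * h2 (W ω, M ω, D ω, X ω)
          + -(h1' (W ω, D ω, X ω)
              * ((1 - A ω) * q1 (Z ω, D ω, X ω) - A ω * q0 (Z ω, X ω)))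
          + -(h0' (W ω, X ω) * (A ω * q0 (Z ω, X ω) - 1))
          + A ω * q2' (Z ω, M ω, D ω, X ω) * (Y ω - h2 (W ω, M ω, D ω, X ω)) := by
    funext ω; ring
  have it12 : Integrable (fun ω => (1 - A ω) * q1 (Z ω, D ω, X ω) * h2 (W ω, M ω, D ω, X ω)
      + -(h1' (W ω, D ω, X ω)
          * ((1 - A ω) * q1 (Z ω, D ω, X ω) - A ω * q0 (Z ω, X ω)))) μ := by
    exact it1.add it2
  have it123 : Integrable (fun ω => (1 - A ω) * q1 (Z ω, D ω, X ω) * h2 (W ω, M ω, D ω, X ω)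
      + -(h1' (W ω, D ω, X ω)
          * ((1 - A ω) * q1 (Z ω, D ω, X ω) - A ω * q0 (Z ω, X ω)))
      + -(h0' (W ω, X ω) * (A ω * q0 (Z ω, X ω) - 1))) μ := by
    exact it12.add it3
  rw [hsplit, integral_add it123 it4, integral_add it12 it3,
    integral_add it1 it2, integral_neg, integral_neg, Ze, Zd, Z3]
  ring
end

section
/- Let U, Z, A, M, D, X, W, Y be random variables on a finite probability space with A ∈ {0,1}. Assume: (i) conditional independence Z ⫫ (W, Y, M, D) | (A, U, X); (ii) completeness: for every function g(u) and every fixed (m,d,x) with positive probability, E[g(U) | Z, A=1, M=m, D=d, X=x] = 0 a.s. implies g(U)·1{A=1, M=m, D=d, X=x has positive conditional probability given U} corresponds to g(U)=0 a.s. on the relevant support. Let h2 be a function of (W,M,D,X) satisfying E[Y − h2(W,M,D,X) | A=1, M, D, Z, X] = 0 almost surely. Then E[Y − h2(W,M,D,X) | A=1, M, D, U, X] = 0 almost surely. -/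
open MeasureTheory ProbabilityTheory Set

section Helpers
variable {Ω : Type*} [Fintype Ω] [mΩ : MeasurableSpace Ω]
set_option linter.unusedSectionVars false

private lemma aux_int (ν : Measure Ω) [IsFiniteMeasure ν] {f : Ω → ℝ} (hf : Measurable f) :
    Integrable f ν := by
  classical
  refine Integrable.mono' (integrable_const ((Finset.univ.sup fun ω => ‖f ω‖₊ : NNReal) : ℝ))
    hf.aestronglyMeasurable ?_
  refine Filter.Eventually.of_forall fun ω => ?_
  have h : ‖f ω‖₊ ≤ Finset.univ.sup fun ω => ‖f ω‖₊ :=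
    Finset.le_sup (f := fun ω => ‖f ω‖₊) (Finset.mem_univ ω)
  calc ‖f ω‖ = ((‖f ω‖₊ : NNReal) : ℝ) := (coe_nnnorm _).symm
    _ ≤ _ := NNReal.coe_le_coe.mpr h

private lemma meas_comp_finite {φ : Ω → ℝ} (hφ : Measurable φ) (g : ℝ → ℝ) :
    Measurable (fun ω => g (φ ω)) := by
  classical
  have h : (fun ω => g (φ ω))
      = fun ω => ∑ u ∈ Finset.image φ Finset.univ, if φ ω = u then g u else 0 := by
    funext ω
    rw [Finset.sum_eq_single (φ ω)]
    · simp
    · intro b _ hb; simp [Ne.symm hb]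
    · intro h; exact absurd (Finset.mem_image_of_mem φ (Finset.mem_univ ω)) h
  rw [h]
  refine Finset.measurable_sum _ fun u _ => Measurable.ite (hφ (measurableSet_singleton u))
    measurable_const measurable_const

private lemma sum_fibers {α : Type*} [MeasurableSpace α] [MeasurableSingletonClass α]
    [DecidableEq α]
    (ν : Measure Ω) [IsFiniteMeasure ν] {fn : Ω → α} (hfn : Measurable fn)
    {g : Ω → ℝ} (hg : Measurable g) :
    ∫ ω, g ω ∂ν = ∑ t ∈ Finset.image fn Finset.univ, ∫ ω in fn ⁻¹' {t}, g ω ∂ν := by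
  classical
  have hfib : ∀ t : α, MeasurableSet (fn ⁻¹' {t}) := fun t => hfn (measurableSet_singleton t)
  have hdecomp : g = fun ω => ∑ t ∈ Finset.image fn Finset.univ,
      (fn ⁻¹' {t}).indicator g ω := by
    funext ω
    rw [Finset.sum_eq_single (fn ω)]
    · simp [Set.indicator_of_mem, Set.mem_preimage]
    · intro b _ hb
      exact Set.indicator_of_notMem (fun h => hb (by simpa using h.symm)) _
    · intro h; exact absurd (Finset.mem_image_of_mem fn (Finset.mem_univ ω)) h
  calc ∫ ω, g ω ∂ν
      = ∫ ω, ∑ t ∈ Finset.image fn Finset.univ, (fn ⁻¹' {t}).indicator g ω ∂ν := by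
        conv_lhs => rw [hdecomp]
    _ = ∑ t ∈ Finset.image fn Finset.univ, ∫ ω, (fn ⁻¹' {t}).indicator g ω ∂ν :=
        integral_finset_sum _ (fun t _ => (aux_int ν hg).indicator (hfib t))
    _ = ∑ t ∈ Finset.image fn Finset.univ, ∫ ω in fn ⁻¹' {t}, g ω ∂ν :=
        Finset.sum_congr rfl fun t _ => integral_indicator (hfib t)

private lemma trim_sf {α : Type*} [MeasurableSpace α]
    (ν : Measure Ω) [IsFiniteMeasure ν] {fn : Ω → α} (hfn : Measurable fn) :
    SigmaFinite (ν.trim hfn.comap_le) := by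
  have : IsFiniteMeasure (ν.trim hfn.comap_le) := by
    refine ⟨?_⟩
    rw [trim_measurableSet_eq hfn.comap_le (@MeasurableSet.univ _ _)]
    exact measure_lt_top ν _
  infer_instance

private lemma fiber_int_zero {α : Type*} [MeasurableSpace α] [MeasurableSingletonClass α]
    (ν : Measure Ω) [IsFiniteMeasure ν] {fn : Ω → α} (hfn : Measurable fn)
    {g : Ω → ℝ} (hg : Measurable g)
    (hce : (ν[g | MeasurableSpace.comap fn inferInstance]) =ᵐ[ν] 0) (t : α) :
    ∫ ω in fn ⁻¹' {t}, g ω ∂ν = 0 := by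
  have hm : MeasurableSpace.comap fn inferInstance ≤ mΩ := hfn.comap_le
  haveI := trim_sf ν hfn
  have hs : MeasurableSet[MeasurableSpace.comap fn inferInstance] (fn ⁻¹' {t}) :=
    ⟨{t}, measurableSet_singleton t, rfl⟩
  rw [← setIntegral_condExp hm (aux_int ν hg) hs]
  calc ∫ ω in fn ⁻¹' {t}, (ν[g | MeasurableSpace.comap fn inferInstance]) ω ∂ν
      = ∫ ω in fn ⁻¹' {t}, (0 : ℝ) ∂ν :=
        setIntegral_congr_ae (hm _ hs) (hce.mono fun ω h _ => h)
    _ = 0 := by simp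

private lemma condexp_zero_of_fibers {α : Type*} [MeasurableSpace α] [MeasurableSingletonClass α]
    (ν : Measure Ω) [IsFiniteMeasure ν] {fn : Ω → α} (hfn : Measurable fn)
    {g : Ω → ℝ} (hg : Measurable g)
    (h : ∀ t : α, ∫ ω in fn ⁻¹' {t}, g ω ∂ν = 0) :
    (ν[g | MeasurableSpace.comap fn inferInstance]) =ᵐ[ν] 0 := by
  classical
  have hm : MeasurableSpace.comap fn inferInstance ≤ mΩ := hfn.comap_le
  haveI := trim_sf ν hfn
  have hfib : ∀ t : α, MeasurableSet (fn ⁻¹' {t}) := fun t => hfn (measurableSet_singleton t)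
  refine (ae_eq_condExp_of_forall_setIntegral_eq hm (aux_int ν hg)
    (fun s _ _ => (integrable_zero _ _ _).integrableOn) (fun s hs _ => ?_)
    ⟨0, @stronglyMeasurable_const _ _ (MeasurableSpace.comap fn inferInstance) _ 0,
      Filter.EventuallyEq.rfl⟩).symm
  obtain ⟨S, hS, rfl⟩ := hs
  have h0 : (∫ ω in fn ⁻¹' S, (0 : ℝ) ∂ν) = 0 := by simp
  simp only [Pi.zero_apply, h0]
  have : ∫ ω in fn ⁻¹' S, g ω ∂ν = ∫ ω, g ω ∂(ν.restrict (fn ⁻¹' S)) := rfl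
  rw [this, sum_fibers (ν.restrict (fn ⁻¹' S)) hfn hg]
  refine (Finset.sum_eq_zero fun t _ => ?_).symm
  have hr : (ν.restrict (fn ⁻¹' S)).restrict (fn ⁻¹' {t}) = ν.restrict (fn ⁻¹' {t} ∩ fn ⁻¹' S) :=
    Measure.restrict_restrict (hfib t)
  show ∫ ω, g ω ∂((ν.restrict (fn ⁻¹' S)).restrict (fn ⁻¹' {t})) = 0
  rw [hr]
  by_cases ht : t ∈ S
  · have hset : fn ⁻¹' {t} ∩ fn ⁻¹' S = fn ⁻¹' {t} := by
      ext ω; simp [Set.mem_preimage]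
      intro h'; subst h'; exact ht
    rw [hset]; exact h t
  · have hset : fn ⁻¹' {t} ∩ fn ⁻¹' S = ∅ := by
      ext ω; simp [Set.mem_preimage]
      intro h'; subst h'; exact ht
    rw [hset]; simp

private lemma setIntegral_cond (μ : Measure Ω) {E s : Set Ω} (hs : MeasurableSet s) (f : Ω → ℝ) :
    ∫ ω in s, f ω ∂(μ[|E]) = (μ E).toReal⁻¹ * ∫ ω in s ∩ E, f ω ∂μ := by
  rw [ProbabilityTheory.cond, Measure.restrict_smul, integral_smul_measure,
    Measure.restrict_restrict hs, ENNReal.toReal_inv, smul_eq_mul]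

private lemma decomp_fibers {α : Type*} [MeasurableSpace α] [MeasurableSingletonClass α]
    [DecidableEq α] (μ : Measure Ω) [IsFiniteMeasure μ] {fn : Ω → α} (hfn : Measurable fn)
    {h : Ω → ℝ} (hh : Measurable h) (s : Set Ω) :
    ∫ ω in s, h ω ∂μ = ∑ t ∈ Finset.image fn Finset.univ, ∫ ω in fn ⁻¹' {t} ∩ s, h ω ∂μ := by
  calc ∫ ω in s, h ω ∂μ = ∫ ω, h ω ∂(μ.restrict s) := rfl
    _ = ∑ t ∈ Finset.image fn Finset.univ, ∫ ω in fn ⁻¹' {t}, h ω ∂(μ.restrict s) :=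
        sum_fibers _ hfn hh
    _ = ∑ t ∈ Finset.image fn Finset.univ, ∫ ω in fn ⁻¹' {t} ∩ s, h ω ∂μ :=
        Finset.sum_congr rfl fun t _ => by
          rw [← Measure.restrict_restrict (hfn (measurableSet_singleton t))]

private lemma setInt_zero (μ : Measure Ω) {s : Set Ω} (f : Ω → ℝ) (h : μ s = 0) :
    ∫ ω in s, f ω ∂μ = 0 := by
  rw [Measure.restrict_eq_zero.mpr h]; exact integral_zero_measure f

end Helpers

set_option maxHeartbeats 1000000

/-- latent validity of the outcome confounding bridge function on a
finite probability space. Assume (i) the conditional independence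
`Z ⫫ (W,Y,M,D) | (A,U,X)` (stated elementarily via conditional measures given the
events `{A=a, U=u, X=x}`), and (ii) completeness of `U` given `Z` on each positive
probability event `{A=1, M=m, D=d, X=x}`. If `h2(W,M,D,X)` satisfies the observed
bridge equation `E[Y − h2 | A=1, M, D, Z, X] = 0` a.s. (encoded via the conditional
measure given `{A=1}` and the σ-algebra `σ(M,D,Z,X)`), then it satisfies the latent
equation `E[Y − h2 | A=1, M, D, U, X] = 0` a.s. -/
theorem stmt13
    {Ω : Type*} [Fintype Ω] [mΩ : MeasurableSpace Ω] (μ : Measure Ω)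
    [IsProbabilityMeasure μ]
    (A U Z W Y M D X : Ω → ℝ)
    (hA : Measurable A) (hU : Measurable U) (hZ : Measurable Z) (hW : Measurable W)
    (hY : Measurable Y) (hM : Measurable M) (hD : Measurable D) (hX : Measurable X)
    (hA01 : ∀ ω, A ω = 0 ∨ A ω = 1)
    -- (i) Z ⫫ (W, Y, M, D) | (A, U, X), stated elementarily on the finite space
    (hCI : ∀ (a u x z : ℝ) (v : ℝ × ℝ × ℝ × ℝ),
      (μ[|{ω | A ω = a ∧ U ω = u ∧ X ω = x}])
          ({ω | Z ω = z} ∩ {ω | (W ω, Y ω, M ω, D ω) = v})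
        = (μ[|{ω | A ω = a ∧ U ω = u ∧ X ω = x}]) {ω | Z ω = z}
            * (μ[|{ω | A ω = a ∧ U ω = u ∧ X ω = x}]) {ω | (W ω, Y ω, M ω, D ω) = v})
    -- (ii) completeness of U given Z on each event {A=1, M=m, D=d, X=x}
    (hcomp : ∀ (g : ℝ → ℝ) (m₀ d₀ x₀ : ℝ),
      0 < μ {ω | A ω = 1 ∧ M ω = m₀ ∧ D ω = d₀ ∧ X ω = x₀} →
      ((μ[|{ω | A ω = 1 ∧ M ω = m₀ ∧ D ω = d₀ ∧ X ω = x₀}])[(fun ω => g (U ω)) | MeasurableSpace.comap Z inferInstance])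
        =ᵐ[μ[|{ω | A ω = 1 ∧ M ω = m₀ ∧ D ω = d₀ ∧ X ω = x₀}]] 0 →
      (∀ᵐ ω ∂(μ[|{ω | A ω = 1 ∧ M ω = m₀ ∧ D ω = d₀ ∧ X ω = x₀}]), g (U ω) = 0))
    (h2 : ℝ × ℝ × ℝ × ℝ → ℝ) (hh2 : Measurable h2)
    -- observed bridge equation: E[Y − h2 | A=1, M, D, Z, X] = 0 a.s.
    (hbridge : ((μ[|{ω | A ω = 1}])[(fun ω => Y ω - h2 (W ω, M ω, D ω, X ω)) |
          MeasurableSpace.comap (fun ω => (M ω, D ω, Z ω, X ω)) inferInstance])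
        =ᵐ[μ[|{ω | A ω = 1}]] 0) :
    -- latent bridge equation: E[Y − h2 | A=1, M, D, U, X] = 0 a.s.
    ((μ[|{ω | A ω = 1}])[(fun ω => Y ω - h2 (W ω, M ω, D ω, X ω)) |
          MeasurableSpace.comap (fun ω => (M ω, D ω, U ω, X ω)) inferInstance])
      =ᵐ[μ[|{ω | A ω = 1}]] 0 := by
  classical
  set f : Ω → ℝ := fun ω => Y ω - h2 (W ω, M ω, D ω, X ω) with hfdef
  have hf : Measurable f := hY.sub (hh2.comp (hW.prodMk (hM.prodMk (hD.prodMk hX))))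
  by_cases hA1 : μ {ω | A ω = 1} = 0
  · have hzero : μ[|{ω | A ω = 1}] = 0 := by
      rw [ProbabilityTheory.cond, Measure.restrict_eq_zero.mpr hA1, smul_zero]
    rw [hzero]
    simp [Filter.EventuallyEq, MeasureTheory.ae_zero]
  · have hAm : MeasurableSet {ω | A ω = 1} := hA (measurableSet_singleton 1)
    haveI : IsProbabilityMeasure (μ[|{ω | A ω = 1}]) := cond_isProbabilityMeasure hA1
    have hMDZX : Measurable fun ω => (M ω, D ω, Z ω, X ω) :=
      hM.prodMk (hD.prodMk (hZ.prodMk hX))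
    have hMDUX : Measurable fun ω => (M ω, D ω, U ω, X ω) :=
      hM.prodMk (hD.prodMk (hU.prodMk hX))
    have cA_ne : (μ {ω | A ω = 1}).toReal⁻¹ ≠ 0 :=
      inv_ne_zero (ENNReal.toReal_ne_zero.mpr ⟨hA1, measure_ne_top μ _⟩)
    -- Step A: observed fiber integrals vanish
    have obs : ∀ m d z x : ℝ,
        ∫ ω in {ω | A ω = 1 ∧ M ω = m ∧ D ω = d ∧ Z ω = z ∧ X ω = x}, f ω ∂μ = 0 := by
      intro m d z x
      have h1 := fiber_int_zero (μ[|{ω | A ω = 1}]) hMDZX hf hbridge (m, d, z, x)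
      rw [setIntegral_cond μ (hMDZX (measurableSet_singleton (m, d, z, x))) f] at h1
      have hset : ((fun ω => (M ω, D ω, Z ω, X ω)) ⁻¹' {(m, d, z, x)}) ∩ {ω | A ω = 1}
          = {ω | A ω = 1 ∧ M ω = m ∧ D ω = d ∧ Z ω = z ∧ X ω = x} := by
        ext ω
        simp only [Set.mem_inter_iff, Set.mem_preimage, Set.mem_singleton_iff,
          Set.mem_setOf_eq, Prod.mk.injEq]
        tauto
      rw [hset] at h1
      rcases mul_eq_zero.mp h1 with h | h
      · exact absurd h cA_ne
      · exact h
    -- Step B: latent fiber integrals vanish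
    have key0 : ∀ m d u x : ℝ,
        ∫ ω in {ω | A ω = 1 ∧ M ω = m ∧ D ω = d ∧ U ω = u ∧ X ω = x}, f ω ∂μ = 0 := by
      intro m d u₀ x
      -- the event E = {A=1, M=m, D=d, X=x}
      set E : Set Ω := {ω | A ω = 1 ∧ M ω = m ∧ D ω = d ∧ X ω = x} with hEdef
      have hE : MeasurableSet E :=
        (hA (measurableSet_singleton 1)).inter ((hM (measurableSet_singleton m)).inter
          ((hD (measurableSet_singleton d)).inter (hX (measurableSet_singleton x))))
      set F : ℝ → Set Ω :=
        fun u => {ω | A ω = 1 ∧ M ω = m ∧ D ω = d ∧ U ω = u ∧ X ω = x} with hFdef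
      have hFsubE : ∀ u, F u ⊆ E := by
        intro u ω hω; exact ⟨hω.1, hω.2.1, hω.2.2.1, hω.2.2.2.2⟩
      by_cases hE0 : μ E = 0
      · exact setInt_zero μ f (measure_mono_null (hFsubE u₀) hE0)
      · have hEpos : 0 < μ E := pos_iff_ne_zero.mpr hE0
        set S : ℝ → ℝ := fun u => ∫ ω in F u, f ω ∂μ with hSdef
        set Q : ℝ → ℝ := fun u => (μ (F u)).toReal with hQdef
        set g : ℝ → ℝ := fun u => if Q u = 0 then 0 else S u / Q u with hgdef
        -- the core claim, using conditional independence
        have claim : ∀ u z : ℝ,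
            g u * (μ (U ⁻¹' {u} ∩ (Z ⁻¹' {z} ∩ E))).toReal
              = ∫ ω in U ⁻¹' {u} ∩ (Z ⁻¹' {z} ∩ E), f ω ∂μ := by
          intro u z
          set C : Set Ω := {ω | A ω = 1 ∧ U ω = u ∧ X ω = x} with hCdef
          have hC : MeasurableSet C :=
            (hA (measurableSet_singleton 1)).inter
              ((hU (measurableSet_singleton u)).inter (hX (measurableSet_singleton x)))
          set G : Set Ω := U ⁻¹' {u} ∩ (Z ⁻¹' {z} ∩ E) with hGdef
          have hΨ : Measurable (fun ω => (W ω, Y ω, M ω, D ω)) :=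
            hW.prodMk (hY.prodMk (hM.prodMk hD))
          have hGC : G ⊆ C := by
            rintro ω ⟨hb1, hb2, hb3⟩
            have hE' : A ω = 1 ∧ M ω = m ∧ D ω = d ∧ X ω = x := hb3
            exact ⟨hE'.1, hb1, hE'.2.2.2⟩
          have hGF : G ⊆ F u := by
            rintro ω ⟨hb1, hb2, hb3⟩
            have hE' : A ω = 1 ∧ M ω = m ∧ D ω = d ∧ X ω = x := hb3
            exact ⟨hE'.1, hE'.2.1, hE'.2.2.1, hb1, hE'.2.2.2⟩
          by_cases hc0 : μ C = 0
          · have hG0 : μ G = 0 := measure_mono_null hGC hc0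
            simp [setInt_zero μ f hG0, hG0]
          · have hct : μ C ≠ ⊤ := measure_ne_top μ C
            have hc1 : μ C * (μ C)⁻¹ = 1 := ENNReal.mul_inv_cancel hc0 hct
            -- the factorization from conditional independence
            have key : ∀ v : ℝ × ℝ × ℝ × ℝ,
                μ ((fun ω => (W ω, Y ω, M ω, D ω)) ⁻¹' {v} ∩ (C ∩ Z ⁻¹' {z})) * μ C
                  = μ (C ∩ Z ⁻¹' {z})
                      * μ ((fun ω => (W ω, Y ω, M ω, D ω)) ⁻¹' {v} ∩ C) := by
              intro v
              have h := hCI 1 u x z v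
              rw [cond_apply hC, cond_apply hC, cond_apply hC] at h
              have e1 : C ∩ ({ω | Z ω = z} ∩ {ω | (W ω, Y ω, M ω, D ω) = v})
                  = (fun ω => (W ω, Y ω, M ω, D ω)) ⁻¹' {v} ∩ (C ∩ Z ⁻¹' {z}) := by
                ext ω
                simp only [Set.mem_inter_iff, Set.mem_setOf_eq, Set.mem_preimage,
                  Set.mem_singleton_iff]
                tauto
              have e3 : C ∩ {ω | (W ω, Y ω, M ω, D ω) = v}
                  = (fun ω => (W ω, Y ω, M ω, D ω)) ⁻¹' {v} ∩ C := by
                ext ω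
                simp only [Set.mem_inter_iff, Set.mem_setOf_eq, Set.mem_preimage,
                  Set.mem_singleton_iff]
                tauto
              have e2 : C ∩ {ω | Z ω = z} = C ∩ Z ⁻¹' {z} := rfl
              rw [e1, e2, e3] at h
              calc μ ((fun ω => (W ω, Y ω, M ω, D ω)) ⁻¹' {v} ∩ (C ∩ Z ⁻¹' {z})) * μ C
                  = (μ C * ((μ C)⁻¹
                      * μ ((fun ω => (W ω, Y ω, M ω, D ω)) ⁻¹' {v} ∩ (C ∩ Z ⁻¹' {z})))) * μ C := by
                    rw [← mul_assoc, hc1, one_mul]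
                _ = (μ C * (((μ C)⁻¹ * μ (C ∩ Z ⁻¹' {z}))
                      * ((μ C)⁻¹ * μ ((fun ω => (W ω, Y ω, M ω, D ω)) ⁻¹' {v} ∩ C)))) * μ C := by
                    rw [h]
                _ = (μ C * (μ C)⁻¹) * (μ C * (μ C)⁻¹)
                      * (μ (C ∩ Z ⁻¹' {z}) * μ ((fun ω => (W ω, Y ω, M ω, D ω)) ⁻¹' {v} ∩ C)) := by
                    ring
                _ = _ := by rw [hc1, one_mul, one_mul]
            have keyR : ∀ v : ℝ × ℝ × ℝ × ℝ,
                (μ ((fun ω => (W ω, Y ω, M ω, D ω)) ⁻¹' {v} ∩ (C ∩ Z ⁻¹' {z}))).toReal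
                    * (μ C).toReal
                  = (μ (C ∩ Z ⁻¹' {z})).toReal
                      * (μ ((fun ω => (W ω, Y ω, M ω, D ω)) ⁻¹' {v} ∩ C)).toReal := by
              intro v
              rw [← ENNReal.toReal_mul, ← ENNReal.toReal_mul, key v]
            -- splitting the fibers
            have hsplitG : ∀ v : ℝ × ℝ × ℝ × ℝ,
                (fun ω => (W ω, Y ω, M ω, D ω)) ⁻¹' {v} ∩ G
                  = if v.2.2.1 = m ∧ v.2.2.2 = d then
                      (fun ω => (W ω, Y ω, M ω, D ω)) ⁻¹' {v} ∩ (C ∩ Z ⁻¹' {z}) else ∅ := by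
              rintro ⟨w, y, m', d'⟩
              by_cases hv : m' = m ∧ d' = d
              · rw [if_pos hv]
                obtain ⟨hm', hd'⟩ := hv; subst hm'; subst hd'
                ext ω
                simp only [Set.mem_inter_iff, Set.mem_preimage, Set.mem_singleton_iff,
                  Prod.mk.injEq, hGdef, hCdef, hEdef, Set.mem_setOf_eq]
                tauto
              · rw [if_neg hv]
                refine Set.eq_empty_iff_forall_notMem.mpr fun ω hω => hv ?_
                obtain ⟨hb1, hb2⟩ := hω
                have h1' : (W ω, Y ω, M ω, D ω) = (w, y, m', d') := hb1
                have hE' : A ω = 1 ∧ M ω = m ∧ D ω = d ∧ X ω = x := hb2.2.2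
                have hm1 : M ω = m' := congrArg (fun p => p.2.2.1) h1'
                have hd1 : D ω = d' := congrArg (fun p => p.2.2.2) h1'
                exact ⟨hm1.symm.trans hE'.2.1, hd1.symm.trans hE'.2.2.1⟩
            have hsplitF : ∀ v : ℝ × ℝ × ℝ × ℝ,
                (fun ω => (W ω, Y ω, M ω, D ω)) ⁻¹' {v} ∩ F u
                  = if v.2.2.1 = m ∧ v.2.2.2 = d then
                      (fun ω => (W ω, Y ω, M ω, D ω)) ⁻¹' {v} ∩ C else ∅ := by
              rintro ⟨w, y, m', d'⟩
              by_cases hv : m' = m ∧ d' = d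
              · rw [if_pos hv]
                obtain ⟨hm', hd'⟩ := hv; subst hm'; subst hd'
                ext ω
                simp only [Set.mem_inter_iff, Set.mem_preimage, Set.mem_singleton_iff,
                  Prod.mk.injEq, hFdef, hCdef, Set.mem_setOf_eq]
                tauto
              · rw [if_neg hv]
                refine Set.eq_empty_iff_forall_notMem.mpr fun ω hω => hv ?_
                obtain ⟨hb1, hb2⟩ := hω
                have h1' : (W ω, Y ω, M ω, D ω) = (w, y, m', d') := hb1
                have hF' : A ω = 1 ∧ M ω = m ∧ D ω = d ∧ U ω = u ∧ X ω = x := hb2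
                have hm1 : M ω = m' := congrArg (fun p => p.2.2.1) h1'
                have hd1 : D ω = d' := congrArg (fun p => p.2.2.2) h1'
                exact ⟨hm1.symm.trans hF'.2.1, hd1.symm.trans hF'.2.2.1⟩
            -- expansions over the fibers of (W,Y,M,D)
            set φ : ℝ × ℝ × ℝ × ℝ → ℝ := fun v => v.2.1 - h2 (v.1, v.2.2.1, v.2.2.2, x)
              with hφdef
            have hμconv : ∀ s : Set Ω, (μ s).toReal = ∫ ω in s, (1 : ℝ) ∂μ := fun s => by
              rw [setIntegral_const, smul_eq_mul, mul_one, measureReal_def]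
            have hconstf : ∀ v : ℝ × ℝ × ℝ × ℝ, ∀ s : Set Ω, MeasurableSet s →
                ∫ ω in (fun ω => (W ω, Y ω, M ω, D ω)) ⁻¹' {v} ∩ (C ∩ s), f ω ∂μ
                  = φ v * (μ ((fun ω => (W ω, Y ω, M ω, D ω)) ⁻¹' {v} ∩ (C ∩ s))).toReal := by
              intro v s hs
              have hms : MeasurableSet
                  ((fun ω => (W ω, Y ω, M ω, D ω)) ⁻¹' {v} ∩ (C ∩ s)) :=
                (hΨ (measurableSet_singleton v)).inter (hC.inter hs)
              have heq : ∀ ω ∈ (fun ω => (W ω, Y ω, M ω, D ω)) ⁻¹' {v} ∩ (C ∩ s),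
                  f ω = (fun _ => φ v) ω := by
                intro ω hω
                obtain ⟨hb1, hb2, _⟩ := hω
                have h1' : (W ω, Y ω, M ω, D ω) = v := hb1
                have hC' : A ω = 1 ∧ U ω = u ∧ X ω = x := hb2
                subst h1'
                show Y ω - h2 (W ω, M ω, D ω, X ω) = Y ω - h2 (W ω, M ω, D ω, x)
                rw [hC'.2.2]
              rw [setIntegral_congr_fun hms heq, setIntegral_const, smul_eq_mul, mul_comm, measureReal_def]
            have hTexp : ∫ ω in G, f ω ∂μ
                = ∑ v ∈ Finset.image (fun ω => (W ω, Y ω, M ω, D ω)) Finset.univ,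
                    if v.2.2.1 = m ∧ v.2.2.2 = d then
                      φ v * (μ ((fun ω => (W ω, Y ω, M ω, D ω)) ⁻¹' {v}
                        ∩ (C ∩ Z ⁻¹' {z}))).toReal
                    else 0 := by
              rw [decomp_fibers μ hΨ hf G]
              refine Finset.sum_congr rfl fun v _ => ?_
              rw [hsplitG v]
              by_cases hv : v.2.2.1 = m ∧ v.2.2.2 = d
              · rw [if_pos hv, if_pos hv,
                  hconstf v (Z ⁻¹' {z}) (hZ (measurableSet_singleton z))]
              · rw [if_neg hv, if_neg hv]
                exact setInt_zero μ f (by simp)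
            have hSexp : S u
                = ∑ v ∈ Finset.image (fun ω => (W ω, Y ω, M ω, D ω)) Finset.univ,
                    if v.2.2.1 = m ∧ v.2.2.2 = d then
                      φ v * (μ ((fun ω => (W ω, Y ω, M ω, D ω)) ⁻¹' {v} ∩ C)).toReal
                    else 0 := by
              rw [hSdef]
              show ∫ ω in F u, f ω ∂μ = _
              rw [decomp_fibers μ hΨ hf (F u)]
              refine Finset.sum_congr rfl fun v _ => ?_
              rw [hsplitF v]
              by_cases hv : v.2.2.1 = m ∧ v.2.2.2 = d
              · rw [if_pos hv, if_pos hv]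
                have := hconstf v Set.univ MeasurableSet.univ
                simpa [Set.inter_univ] using this
              · rw [if_neg hv, if_neg hv]
                exact setInt_zero μ f (by simp)
            have hGexp : (μ G).toReal
                = ∑ v ∈ Finset.image (fun ω => (W ω, Y ω, M ω, D ω)) Finset.univ,
                    if v.2.2.1 = m ∧ v.2.2.2 = d then
                      (μ ((fun ω => (W ω, Y ω, M ω, D ω)) ⁻¹' {v} ∩ (C ∩ Z ⁻¹' {z}))).toReal
                    else 0 := by
              rw [hμconv G, decomp_fibers μ hΨ measurable_const G]
              refine Finset.sum_congr rfl fun v _ => ?_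
              rw [hsplitG v]
              by_cases hv : v.2.2.1 = m ∧ v.2.2.2 = d
              · rw [if_pos hv, if_pos hv, ← hμconv]
              · rw [if_neg hv, if_neg hv]
                simp
            have hQexp : Q u
                = ∑ v ∈ Finset.image (fun ω => (W ω, Y ω, M ω, D ω)) Finset.univ,
                    if v.2.2.1 = m ∧ v.2.2.2 = d then
                      (μ ((fun ω => (W ω, Y ω, M ω, D ω)) ⁻¹' {v} ∩ C)).toReal
                    else 0 := by
              rw [hQdef]
              show (μ (F u)).toReal = _
              rw [hμconv (F u), decomp_fibers μ hΨ measurable_const (F u)]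
              refine Finset.sum_congr rfl fun v _ => ?_
              rw [hsplitF v]
              by_cases hv : v.2.2.1 = m ∧ v.2.2.2 = d
              · rw [if_pos hv, if_pos hv, ← hμconv]
              · rw [if_neg hv, if_neg hv]
                simp
            -- multiply through by μ C
            have hTc : (∫ ω in G, f ω ∂μ) * (μ C).toReal
                = (μ (C ∩ Z ⁻¹' {z})).toReal * S u := by
              rw [hTexp, hSexp, Finset.sum_mul, Finset.mul_sum]
              refine Finset.sum_congr rfl fun v _ => ?_
              by_cases hv : v.2.2.1 = m ∧ v.2.2.2 = d
              · rw [if_pos hv, if_pos hv]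
                linear_combination φ v * keyR v
              · rw [if_neg hv, if_neg hv]
                ring
            have hGc : (μ G).toReal * (μ C).toReal
                = (μ (C ∩ Z ⁻¹' {z})).toReal * Q u := by
              rw [hGexp, hQexp, Finset.sum_mul, Finset.mul_sum]
              refine Finset.sum_congr rfl fun v _ => ?_
              by_cases hv : v.2.2.1 = m ∧ v.2.2.2 = d
              · rw [if_pos hv, if_pos hv]
                linear_combination keyR v
              · rw [if_neg hv, if_neg hv]
                ring
            -- conclude
            by_cases hQ0 : Q u = 0
            · have hgu : g u = 0 := by simp [hgdef, hQ0]
              have hμF : μ (F u) = 0 := by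
                rcases (ENNReal.toReal_eq_zero_iff _).mp hQ0 with h | h
                · exact h
                · exact absurd h (measure_ne_top μ _)
              have hG0 : μ G = 0 := measure_mono_null hGF hμF
              simp [hgu, setInt_zero μ f hG0]
            · have hcR : (μ C).toReal ≠ 0 := ENNReal.toReal_ne_zero.mpr ⟨hc0, hct⟩
              have hgu : g u = S u / Q u := by simp [hgdef, hQ0]
              apply mul_right_cancel₀ hcR
              calc g u * (μ G).toReal * (μ C).toReal
                  = g u * ((μ G).toReal * (μ C).toReal) := by ring
                _ = S u / Q u * ((μ (C ∩ Z ⁻¹' {z})).toReal * Q u) := by rw [hGc, hgu]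
                _ = (μ (C ∩ Z ⁻¹' {z})).toReal * S u := by
                    field_simp
                _ = (∫ ω in G, f ω ∂μ) * (μ C).toReal := hTc.symm
        -- verify the hypothesis of completeness
        have h0fib : ∀ z : ℝ, ∫ ω in Z ⁻¹' {z}, g (U ω) ∂(μ[|E]) = 0 := by
          intro z
          rw [setIntegral_cond μ (hZ (measurableSet_singleton z))]
          suffices hinner : ∫ ω in Z ⁻¹' {z} ∩ E, g (U ω) ∂μ = 0 by rw [hinner, mul_zero]
          calc ∫ ω in Z ⁻¹' {z} ∩ E, g (U ω) ∂μ
              = ∑ u ∈ Finset.image U Finset.univ,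
                  ∫ ω in U ⁻¹' {u} ∩ (Z ⁻¹' {z} ∩ E), g (U ω) ∂μ :=
                decomp_fibers μ hU (meas_comp_finite hU g) _
            _ = ∑ u ∈ Finset.image U Finset.univ,
                  ∫ ω in U ⁻¹' {u} ∩ (Z ⁻¹' {z} ∩ E), f ω ∂μ := by
                refine Finset.sum_congr rfl fun u _ => ?_
                rw [← claim u z]
                have hGmeas : MeasurableSet (U ⁻¹' {u} ∩ (Z ⁻¹' {z} ∩ E)) :=
                  (hU (measurableSet_singleton u)).inter
                    ((hZ (measurableSet_singleton z)).inter hE)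
                have heq : ∀ ω ∈ U ⁻¹' {u} ∩ (Z ⁻¹' {z} ∩ E), g (U ω) = (fun _ => g u) ω := by
                  intro ω hω
                  simp only [Set.mem_inter_iff, Set.mem_preimage, Set.mem_singleton_iff] at hω
                  rw [hω.1]
                rw [setIntegral_congr_fun hGmeas heq, setIntegral_const, smul_eq_mul, mul_comm, measureReal_def]
            _ = ∫ ω in Z ⁻¹' {z} ∩ E, f ω ∂μ := (decomp_fibers μ hU hf _).symm
            _ = ∫ ω in {ω | A ω = 1 ∧ M ω = m ∧ D ω = d ∧ Z ω = z ∧ X ω = x}, f ω ∂μ := by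
                rw [show Z ⁻¹' {z} ∩ E
                    = {ω | A ω = 1 ∧ M ω = m ∧ D ω = d ∧ Z ω = z ∧ X ω = x} from by
                  ext ω
                  simp only [Set.mem_inter_iff, Set.mem_preimage, Set.mem_singleton_iff,
                    Set.mem_setOf_eq, hEdef]
                  tauto]
            _ = 0 := obs m d z x
        have hce := condexp_zero_of_fibers (μ[|E]) hZ (meas_comp_finite hU g) h0fib
        have hae := hcomp g m d x hEpos hce
        -- conclude S u₀ = 0
        by_cases hQ0 : Q u₀ = 0
        · have : μ (F u₀) = 0 := by
            rcases (ENNReal.toReal_eq_zero_iff _).mp hQ0 with h | h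
            · exact h
            · exact absurd h (measure_ne_top μ _)
          exact setInt_zero μ f this
        · have hgu : g u₀ = 0 := by
            by_contra hne
            have hnull : (μ[|E]) {ω | ¬ g (U ω) = 0} = 0 := hae
            rw [cond_apply hE] at hnull
            have hmE : μ (E ∩ {ω | ¬ g (U ω) = 0}) = 0 := by
              rcases mul_eq_zero.mp hnull with h | h
              · exact absurd h (ENNReal.inv_ne_zero.mpr (measure_ne_top μ E))
              · exact h
            have hsub : F u₀ ⊆ E ∩ {ω | ¬ g (U ω) = 0} := by
              intro ω hω
              refine ⟨hFsubE u₀ hω, ?_⟩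
              have hu : U ω = u₀ := hω.2.2.2.1
              simp only [Set.mem_setOf_eq, hu]
              exact hne
            have : μ (F u₀) = 0 := measure_mono_null hsub hmE
            exact hQ0 (by simp [hQdef, this])
          have : S u₀ / Q u₀ = 0 := by
            simp only [hgdef, if_neg hQ0] at hgu; exact hgu
          have hS0 : S u₀ = 0 := by
            rcases div_eq_zero_iff.mp this with h | h
            · exact h
            · exact absurd h hQ0
          exact hS0
    -- conclude via uniqueness of conditional expectation
    refine condexp_zero_of_fibers (μ[|{ω | A ω = 1}]) hMDUX hf ?_
    rintro ⟨m, d, u, x⟩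
    rw [setIntegral_cond μ (hMDUX (measurableSet_singleton (m, d, u, x))) f]
    have hset : ((fun ω => (M ω, D ω, U ω, X ω)) ⁻¹' {(m, d, u, x)}) ∩ {ω | A ω = 1}
        = {ω | A ω = 1 ∧ M ω = m ∧ D ω = d ∧ U ω = u ∧ X ω = x} := by
      ext ω
      simp only [Set.mem_inter_iff, Set.mem_preimage, Set.mem_singleton_iff,
        Set.mem_setOf_eq, Prod.mk.injEq]
      tauto
    rw [hset, key0 m d u x, mul_zero]
end

section
/- Let A ∈ {0,1} and Y, Z, M, D, X, W be random variables, and suppose q2(Z,M,D,X) and q2'(Z,M,D,X) are bounded measurable functions both satisfying E[A·q(Z,M,D,X) − (1−A)·q1(Z,D,X) | W, M, D, X] = 0 almost surely (for the same fixed integrable q1), and suppose further that E[Y | A=1, M, D, Z, X] admits an outcome bridge representation: there exists bounded h2(W,M,D,X) with E[Y − h2(W,M,D,X) | A=1, M, D, Z, X] = 0 a.s. Then E[A·Y·q2(Z,M,D,X)] = E[A·Y·q2'(Z,M,D,X)]. -/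
open MeasureTheory ProbabilityTheory
open scoped MeasureTheory ProbabilityTheory

/-- non-uniqueness of the treatment bridge function `q2` does not
affect identification. If bounded measurable `q2` and `q2'` both solve
`E[A·q(Z,M,D,X) − (1−A)·q1(Z,D,X) | W, M, D, X] = 0` a.s. (same integrable `q1`),
and a bounded outcome bridge `h2` exists with `E[Y − h2 | A=1, M, D, Z, X] = 0`
a.s., then `E[A·Y·q2] = E[A·Y·q2']`. -/
theorem stmt15
    {Ω : Type*} [mΩ : MeasurableSpace Ω] (μ : Measure Ω) [IsProbabilityMeasure μ]
    (A Y Z W M D X : Ω → ℝ)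
    (hA : Measurable A) (hY : Measurable Y) (hZ : Measurable Z) (hW : Measurable W)
    (hM : Measurable M) (hD : Measurable D) (hX : Measurable X)
    (hA01 : ∀ ω, A ω = 0 ∨ A ω = 1)
    (hYint : Integrable Y μ)
    (q1 : ℝ × ℝ × ℝ → ℝ) (hq1 : Measurable q1)
    (hq1int : Integrable (fun ω => q1 (Z ω, D ω, X ω)) μ)
    (q2 q2' : ℝ × ℝ × ℝ × ℝ → ℝ)
    (hq2 : Measurable q2) (Cq2 : ℝ) (hq2b : ∀ p, |q2 p| ≤ Cq2)
    (hq2' : Measurable q2') (Cq2' : ℝ) (hq2'b : ∀ p, |q2' p| ≤ Cq2')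
    (mWMDX mMDZX : MeasurableSpace Ω)
    (hmWMDX : mWMDX = MeasurableSpace.comap (fun ω => (W ω, M ω, D ω, X ω)) inferInstance)
    (hmMDZX : mMDZX = MeasurableSpace.comap (fun ω => (M ω, D ω, Z ω, X ω)) inferInstance)
    (hq2eq : (μ[(fun ω => A ω * q2 (Z ω, M ω, D ω, X ω)
        - (1 - A ω) * q1 (Z ω, D ω, X ω)) | mWMDX]) =ᵐ[μ] 0)
    (hq2'eq : (μ[(fun ω => A ω * q2' (Z ω, M ω, D ω, X ω)
        - (1 - A ω) * q1 (Z ω, D ω, X ω)) | mWMDX]) =ᵐ[μ] 0)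
    (h2 : ℝ × ℝ × ℝ × ℝ → ℝ) (hh2 : Measurable h2) (Ch2 : ℝ) (hh2b : ∀ p, |h2 p| ≤ Ch2)
    (hbridge : ((μ[|{ω | A ω = 1}])[(fun ω => Y ω - h2 (W ω, M ω, D ω, X ω)) | mMDZX])
        =ᵐ[μ[|{ω | A ω = 1}]] 0)
    (hi : Integrable (fun ω => A ω * Y ω * q2 (Z ω, M ω, D ω, X ω)) μ)
    (hi' : Integrable (fun ω => A ω * Y ω * q2' (Z ω, M ω, D ω, X ω)) μ) :
    ∫ ω, A ω * Y ω * q2 (Z ω, M ω, D ω, X ω) ∂μ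
      = ∫ ω, A ω * Y ω * q2' (Z ω, M ω, D ω, X ω) ∂μ := by
  subst hmWMDX hmMDZX
  -- notation
  set S : Set Ω := {ω | A ω = 1} with hSdef
  set E : Ω → ℝ := (fun ω => Y ω - h2 (W ω, M ω, D ω, X ω)) with hEdef
  set g : Ω → ℝ := fun ω => q2 (Z ω, M ω, D ω, X ω) - q2' (Z ω, M ω, D ω, X ω) with hgdef
  have hZMDX : Measurable[mΩ] fun ω => (Z ω, M ω, D ω, X ω) :=
    hZ.prodMk (hM.prodMk (hD.prodMk hX))
  have hgM : Measurable[mΩ] g := ((hq2.comp hZMDX).sub (hq2'.comp hZMDX))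
  have hgb : ∀ ω, |g ω| ≤ Cq2 + Cq2' := fun ω =>
    (abs_sub _ _).trans (add_le_add (hq2b _) (hq2'b _))
  set h2W : Ω → ℝ := fun ω => h2 (W ω, M ω, D ω, X ω) with hh2Wdef
  have hh2WM : Measurable[mΩ] h2W := hh2.comp (hW.prodMk (hM.prodMk (hD.prodMk hX)))
  have hh2Wb : ∀ ω, |h2W ω| ≤ Ch2 := fun ω => hh2b _
  have hA1 : ∀ ω, |A ω| ≤ 1 := by
    intro ω; rcases hA01 ω with h | h <;> simp [h]
  have hSm : MeasurableSet[mΩ] S := hA (measurableSet_singleton 1)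
  have hindic : ∀ f : Ω → ℝ, (fun ω => A ω * f ω) = S.indicator f := by
    intro f; funext ω
    rcases hA01 ω with h | h
    · have : ω ∉ S := by simp [hSdef, h]
      simp [Set.indicator_of_notMem this, h]
    · have : ω ∈ S := by simp [hSdef, h]
      simp [Set.indicator_of_mem this, h]
  have hbint : ∀ (f : Ω → ℝ) (C : ℝ), Measurable[mΩ] f → (∀ ω, |f ω| ≤ C) →
      ∀ (ν : @Measure Ω mΩ), IsFiniteMeasure ν → Integrable f ν := by
    intro f C hf hC ν hν
    exact (integrable_const C).mono' (hf.stronglyMeasurable.aestronglyMeasurable)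
      (Filter.Eventually.of_forall fun ω => by simpa using hC ω)
  have habsmul : ∀ (f : Ω → ℝ) (C : ℝ), (∀ ω, |f ω| ≤ C) → ∀ ω, |A ω * f ω| ≤ C := by
    intro f C hC ω
    rw [abs_mul]
    calc |A ω| * |f ω| ≤ 1 * C :=
          mul_le_mul (hA1 ω) (hC ω) (abs_nonneg _) one_pos.le
      _ = C := one_mul C
  have hm1 : (MeasurableSpace.comap (fun ω => (W ω, M ω, D ω, X ω)) inferInstance) ≤ mΩ :=
    (hW.prodMk (hM.prodMk (hD.prodMk hX))).comap_le
  have hm2 : (MeasurableSpace.comap (fun ω => (M ω, D ω, Z ω, X ω)) inferInstance) ≤ mΩ :=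
    (hM.prodMk (hD.prodMk (hZ.prodMk hX))).comap_le
  -- Step A: E[A·g | W,M,D,X] = 0 a.e.
  have hIntAg : Integrable (fun ω => A ω * g ω) μ :=
    hbint _ (Cq2 + Cq2') (hA.mul hgM) (habsmul _ _ hgb) μ inferInstance
  have hF : Integrable (fun ω => A ω * q2 (Z ω, M ω, D ω, X ω)
      - (1 - A ω) * q1 (Z ω, D ω, X ω)) μ := by
    refine Integrable.sub
      (hbint _ Cq2 (hA.mul (hq2.comp hZMDX)) (habsmul _ _ fun ω => hq2b _) μ inferInstance) ?_
    refine hq1int.bdd_mul ((measurable_const.sub hA).stronglyMeasurable.aestronglyMeasurable)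
      (c := 2) (Filter.Eventually.of_forall fun ω => ?_)
    have := hA1 ω
    rw [Real.norm_eq_abs]
    cases' abs_le.mp this with h1 h2
    rw [abs_le]; constructor <;> linarith
  have hF' : Integrable (fun ω => A ω * q2' (Z ω, M ω, D ω, X ω)
      - (1 - A ω) * q1 (Z ω, D ω, X ω)) μ := by
    refine Integrable.sub
      (hbint _ Cq2' (hA.mul (hq2'.comp hZMDX)) (habsmul _ _ fun ω => hq2'b _) μ inferInstance) ?_
    refine hq1int.bdd_mul ((measurable_const.sub hA).stronglyMeasurable.aestronglyMeasurable)
      (c := 2) (Filter.Eventually.of_forall fun ω => ?_)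
    have := hA1 ω
    rw [Real.norm_eq_abs]
    cases' abs_le.mp this with h1 h2
    rw [abs_le]; constructor <;> linarith
  have hAgsub : (fun ω => A ω * g ω)
      = (fun ω => A ω * q2 (Z ω, M ω, D ω, X ω) - (1 - A ω) * q1 (Z ω, D ω, X ω))
        - (fun ω => A ω * q2' (Z ω, M ω, D ω, X ω) - (1 - A ω) * q1 (Z ω, D ω, X ω)) := by
    funext ω; simp only [Pi.sub_apply, hgdef]; ring
  have hcondAg : μ[(fun ω => A ω * g ω)
      | MeasurableSpace.comap (fun ω => (W ω, M ω, D ω, X ω)) inferInstance] =ᵐ[μ] 0 := by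
    rw [hAgsub]
    refine (condExp_sub hF hF' _).trans ?_
    filter_upwards [hq2eq, hq2'eq] with ω h1 h2
    simp [Pi.sub_apply, h1, h2]
  -- Step B: ∫ h2W · (A·g) = 0
  have hsmh2W : StronglyMeasurable[MeasurableSpace.comap
      (fun ω => (W ω, M ω, D ω, X ω)) inferInstance] h2W :=
    (hh2.comp (Measurable.of_comap_le le_rfl)).stronglyMeasurable
  have hInth2Ag : Integrable (fun ω => h2W ω * (A ω * g ω)) μ :=
    hIntAg.bdd_mul hh2WM.stronglyMeasurable.aestronglyMeasurable
      (c := Ch2) (Filter.Eventually.of_forall fun ω => by rw [Real.norm_eq_abs]; exact hh2Wb ω)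
  have hBzero : ∫ ω, h2W ω * (A ω * g ω) ∂μ = 0 := by
    have hmul : μ[(fun ω => h2W ω * (A ω * g ω))
        | MeasurableSpace.comap (fun ω => (W ω, M ω, D ω, X ω)) inferInstance] =ᵐ[μ]
        h2W * μ[(fun ω => A ω * g ω)
        | MeasurableSpace.comap (fun ω => (W ω, M ω, D ω, X ω)) inferInstance] :=
      condExp_mul_of_stronglyMeasurable_left hsmh2W hInth2Ag hIntAg
    have h0 : μ[(fun ω => h2W ω * (A ω * g ω))
        | MeasurableSpace.comap (fun ω => (W ω, M ω, D ω, X ω)) inferInstance] =ᵐ[μ] 0 := by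
      refine hmul.trans ?_
      filter_upwards [hcondAg] with ω h
      simp [Pi.mul_apply, h, Pi.zero_apply]
    calc ∫ ω, h2W ω * (A ω * g ω) ∂μ
        = ∫ ω, (μ[(fun ω => h2W ω * (A ω * g ω))
            | MeasurableSpace.comap (fun ω => (W ω, M ω, D ω, X ω)) inferInstance]) ω ∂μ :=
          (integral_condExp hm1).symm
      _ = ∫ ω, (0 : Ω → ℝ) ω ∂μ := integral_congr_ae h0
      _ = 0 := by simp
  -- reduce goal to ∫ A·(Y·g) = 0
  rw [← sub_eq_zero, ← integral_sub hi hi']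
  have hgoal : ∀ ω, A ω * Y ω * q2 (Z ω, M ω, D ω, X ω)
      - A ω * Y ω * q2' (Z ω, M ω, D ω, X ω) = A ω * (Y ω * g ω) := by
    intro ω; simp only [hgdef]; ring
  rw [integral_congr_ae (Filter.Eventually.of_forall hgoal)]
  have hIntAYg : Integrable (fun ω => A ω * (Y ω * g ω)) μ := by
    refine (hi.sub hi').congr (Filter.Eventually.of_forall fun ω => ?_)
    simp only [Pi.sub_apply, hgdef]; ring
  -- case split on μ S
  by_cases hS0 : μ S = 0
  · have hA0 : ∀ᵐ ω ∂μ, ω ∉ S := by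
      rw [MeasureTheory.ae_iff]
      simpa using hS0
    refine integral_eq_zero_of_ae ?_
    filter_upwards [hA0] with ω h
    rcases hA01 ω with h0 | h1
    · simp [h0]
    · exact absurd (by simpa [hSdef] using h1) h
  · haveI hμ1 : IsProbabilityMeasure (μ[|S]) := cond_isProbabilityMeasure hS0
    have hSne : (μ S) ≠ ⊤ := measure_ne_top μ S
    have hcinv : ((μ S)⁻¹).toReal = ((μ S).toReal)⁻¹ := ENNReal.toReal_inv _
    set c := (μ S).toReal with hc
    have hcpos : 0 < c := ENNReal.toReal_pos hS0 hSne
    have hcond_int : ∀ f : Ω → ℝ, ∫ ω, f ω ∂(μ[|S]) = c⁻¹ * ∫ ω, f ω ∂(μ.restrict S) := by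
      intro f
      rw [ProbabilityTheory.cond, integral_smul_measure, hcinv, smul_eq_mul]
    have hA_restr : ∀ f : Ω → ℝ, ∫ ω, A ω * f ω ∂μ = c * ∫ ω, f ω ∂(μ[|S]) := by
      intro f
      rw [hcond_int f, hindic f, integral_indicator hSm, ← mul_assoc,
        mul_inv_cancel₀ hcpos.ne', one_mul]
    have hIntY1 : Integrable Y (μ[|S]) := by
      rw [ProbabilityTheory.cond]
      exact (hYint.restrict).smul_measure (ENNReal.inv_ne_top.mpr hS0)
    have hIntE1 : Integrable E (μ[|S]) :=
      hIntY1.sub (hbint h2W Ch2 hh2WM hh2Wb _ inferInstance)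
    have hIntgE1 : Integrable (fun ω => g ω * E ω) (μ[|S]) :=
      hIntE1.bdd_mul hgM.stronglyMeasurable.aestronglyMeasurable
        (c := Cq2 + Cq2') (Filter.Eventually.of_forall fun ω => by rw [Real.norm_eq_abs]; exact hgb ω)
    have hr : Measurable (fun p : ℝ × ℝ × ℝ × ℝ => (p.2.2.1, p.1, p.2.1, p.2.2.2)) := by
      fun_prop
    have hgsm : StronglyMeasurable[MeasurableSpace.comap
        (fun ω => (M ω, D ω, Z ω, X ω)) inferInstance] g :=
      (((hq2.comp hr).sub (hq2'.comp hr)).comp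
        (Measurable.of_comap_le le_rfl)).stronglyMeasurable
    have hEzero : ∫ ω, g ω * E ω ∂(μ[|S]) = 0 := by
      have hmul : (μ[|S])[(fun ω => g ω * E ω) | MeasurableSpace.comap
          (fun ω => (M ω, D ω, Z ω, X ω)) inferInstance] =ᵐ[μ[|S]]
          g * (μ[|S])[E | MeasurableSpace.comap
          (fun ω => (M ω, D ω, Z ω, X ω)) inferInstance] :=
        condExp_mul_of_stronglyMeasurable_left hgsm hIntgE1 hIntE1
      have h0 : (μ[|S])[(fun ω => g ω * E ω) | MeasurableSpace.comap
          (fun ω => (M ω, D ω, Z ω, X ω)) inferInstance] =ᵐ[μ[|S]] 0 := by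
        refine hmul.trans ?_
        filter_upwards [hbridge] with ω h
        simp [Pi.mul_apply, h]
      calc ∫ ω, g ω * E ω ∂(μ[|S])
          = ∫ ω, ((μ[|S])[(fun ω => g ω * E ω) | MeasurableSpace.comap
              (fun ω => (M ω, D ω, Z ω, X ω)) inferInstance]) ω ∂(μ[|S]) :=
            (integral_condExp hm2).symm
        _ = ∫ ω, (0 : Ω → ℝ) ω ∂(μ[|S]) := integral_congr_ae h0
        _ = 0 := by simp
    have hsplit : ∀ ω, A ω * (Y ω * g ω) = h2W ω * (A ω * g ω) + A ω * (g ω * E ω) := by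
      intro ω; simp only [hEdef, hh2Wdef]; ring
    have hIntAgE : Integrable (fun ω => A ω * (g ω * E ω)) μ := by
      refine (hIntAYg.sub hInth2Ag).congr (Filter.Eventually.of_forall fun ω => ?_)
      simp only [Pi.sub_apply, hEdef, hh2Wdef]; ring
    rw [integral_congr_ae (Filter.Eventually.of_forall hsplit),
      integral_add hInth2Ag hIntAgE, hBzero, zero_add,
      hA_restr (fun ω => g ω * E ω), hEzero, mul_zero]
end
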